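/- arXiv:2301.00967 — 2 statements merged into one kernel-verified Lean document; each statement's English description precedes it below -/
import Mathlib

section
/- Under the setting of the previous statement (independence null, centered bounded kernels), Var(T̃_n) = n^{-1}Var(K̃(x,x)L̃(y,y)) + 2(1 - n^{-1})·E[K̃²(x,x')]·E[L̃²(y,y')], where (x',y') is an independent copy of (x,y). In particular, Var(T̃_n) = 2M₂N₂ + O(n^{-1}) with M₂ = E[K̃²(x,x')] and N₂ = E[L̃²(y,y')]. -/
open MeasureTheory ProbabilityTheory

lemma aux_integrable {α : Type*} [MeasurableSpace α] (m : Measure α) [IsFiniteMeasure m]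
    {f : α → ℝ} (hf : AEStronglyMeasurable f m) (C : ℝ) (h : ∀ a, |f a| ≤ C) :
    Integrable f m :=
  memLp_one_iff_integrable.mp (MemLp.of_bound hf C
    (Filter.Eventually.of_forall (fun a => by simpa using h a)))

lemma aux_zero {α β : Type*} [MeasurableSpace α] [MeasurableSpace β]
    (ρ : Measure α) (m : Measure β) [IsFiniteMeasure ρ] [IsFiniteMeasure m]
    {G : α × β → ℝ} (hG : Measurable G) (c : ℝ) (hbd : ∀ p, |G p| ≤ c)
    (h0 : ∀ a, ∫ b, G (a, b) ∂m = 0) : ∫ p, G p ∂(ρ.prod m) = 0 := by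
  rw [integral_prod _ (aux_integrable _ hG.aestronglyMeasurable c hbd)]
  simp [h0]

lemma aux_zero' {α β : Type*} [MeasurableSpace α] [MeasurableSpace β]
    (ρ : Measure α) (m : Measure β) [IsFiniteMeasure ρ] [IsFiniteMeasure m]
    {G : α × β → ℝ} (hG : Measurable G) (c : ℝ) (hbd : ∀ p, |G p| ≤ c)
    (h0 : ∀ b, ∫ a, G (a, b) ∂ρ = 0) : ∫ p, G p ∂(ρ.prod m) = 0 := by
  rw [integral_prod_symm _ (aux_integrable _ hG.aestronglyMeasurable c hbd)]
  simp [h0]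

lemma aux_meas {α β : Type*} [MeasurableSpace α] [MeasurableSpace β] {F : β → β → ℝ}
    (hFm : Measurable fun p : β × β => F p.1 p.2) {u v : α → β}
    (hu : Measurable u) (hv : Measurable v) : Measurable (fun a => F (u a) (v a)) :=
  hFm.comp (hu.prodMk hv)

/-- Under the independence null, Var(T̃_n) = n⁻¹Var(K̃(x,x)L̃(y,y)) + 2(1-n⁻¹)M₂N₂. -/
theorem tilde_Tn_variance
    {X Y : Type*} [MeasurableSpace X] [MeasurableSpace Y]
    (Px : Measure X) (Py : Measure Y)
    [IsProbabilityMeasure Px] [IsProbabilityMeasure Py]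
    {Ω : Type*} [MeasurableSpace Ω] (μ : Measure Ω) [IsProbabilityMeasure μ]
    (Ktil : X → X → ℝ) (Ltil : Y → Y → ℝ)
    (hKmeas : Measurable (Function.uncurry Ktil))
    (hLmeas : Measurable (Function.uncurry Ltil))
    (hKsymm : ∀ x x', Ktil x x' = Ktil x' x) (hLsymm : ∀ y y', Ltil y y' = Ltil y' y)
    (BK BL : ℝ) (hKbdd : ∀ x x', |Ktil x x'| ≤ BK) (hLbdd : ∀ y y', |Ltil y y'| ≤ BL)
    (hKcent : ∀ x', (∫ x, Ktil x x' ∂Px) = 0)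
    (hLcent : ∀ y', (∫ y, Ltil y y' ∂Py) = 0)
    (n : ℕ) (hn : 1 ≤ n)
    (w : Fin n → Ω → X × Y) (hwmeas : ∀ i, Measurable (w i))
    (hwiid : iIndepFun w μ)
    (hwlaw : ∀ i, μ.map (w i) = Px.prod Py)
    (Tn : Ω → ℝ)
    (hTn : ∀ ω, Tn ω = (n : ℝ)⁻¹ *
      ∑ i : Fin n, ∑ j : Fin n, Ktil (w i ω).1 (w j ω).1 * Ltil (w i ω).2 (w j ω).2) :
    variance Tn μ =
      (n : ℝ)⁻¹ * variance (fun p : X × Y => Ktil p.1 p.1 * Ltil p.2 p.2) (Px.prod Py)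
        + 2 * (1 - (n : ℝ)⁻¹) *
            ((∫ q : X × X, (Ktil q.1 q.2) ^ 2 ∂(Px.prod Px)) *
              ∫ q : Y × Y, (Ltil q.1 q.2) ^ 2 ∂(Py.prod Py)) := by
  classical
  set ν : Measure (X × Y) := Px.prod Py with hν
  set F : X × Y → X × Y → ℝ := fun a b => Ktil a.1 b.1 * Ltil a.2 b.2 with hF
  have hFm : Measurable (fun p : (X × Y) × (X × Y) => F p.1 p.2) := by
    apply Measurable.mul
    · exact hKmeas.comp ((measurable_fst.comp measurable_fst).prodMk
        (measurable_fst.comp measurable_snd))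
    · exact hLmeas.comp ((measurable_snd.comp measurable_fst).prodMk
        (measurable_snd.comp measurable_snd))
  have hX : Nonempty X := by
    by_contra h
    rw [not_nonempty_iff] at h
    have h1 : Px Set.univ = 1 := measure_univ
    rw [Set.univ_eq_empty_iff.mpr h, measure_empty] at h1
    exact zero_ne_one h1
  have hBK0 : 0 ≤ BK := le_trans (abs_nonneg _) (hKbdd (Classical.arbitrary X) (Classical.arbitrary X))
  set C : ℝ := BK * BL with hCdef
  have hFbd : ∀ a b, |F a b| ≤ C := by
    intro a b
    rw [hF]
    calc |Ktil a.1 b.1 * Ltil a.2 b.2| = |Ktil a.1 b.1| * |Ltil a.2 b.2| := abs_mul _ _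
    _ ≤ BK * BL := mul_le_mul (hKbdd _ _) (hLbdd _ _) (abs_nonneg _) hBK0
  have hFsymm : ∀ a b, F a b = F b a := by
    intro a b; rw [hF]; simp only; rw [hKsymm, hLsymm]
  have hcentR : ∀ a, ∫ b, F a b ∂ν = 0 := by
    intro a
    rw [hν, hF]
    have : (∫ b : X × Y, Ktil a.1 b.1 * Ltil a.2 b.2 ∂Px.prod Py)
        = (∫ x, Ktil a.1 x ∂Px) * ∫ y, Ltil a.2 y ∂Py := integral_prod_mul _ _
    rw [this]
    have h1 : (∫ x, Ktil a.1 x ∂Px) = 0 := by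
      rw [show (fun x => Ktil a.1 x) = fun x => Ktil x a.1 from funext fun x => hKsymm _ _]
      exact hKcent _
    rw [h1, zero_mul]
  have hcentL : ∀ b, ∫ a, F a b ∂ν = 0 := by
    intro b
    rw [hν, hF]
    have : (∫ a : X × Y, Ktil a.1 b.1 * Ltil a.2 b.2 ∂Px.prod Py)
        = (∫ x, Ktil x b.1 ∂Px) * ∫ y, Ltil y b.2 ∂Py :=
      integral_prod_mul (f := fun x => Ktil x b.1) (g := fun y => Ltil y b.2)
    rw [this, hKcent, zero_mul]
  -- laws
  have law2 : ∀ i j : Fin n, i ≠ j → μ.map (fun ω => (w i ω, w j ω)) = ν.prod ν := by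
    intro i j hij
    have h := hwiid.indepFun hij
    rw [indepFun_iff_map_prod_eq_prod_map_map (hwmeas i).aemeasurable
      (hwmeas j).aemeasurable] at h
    rw [h, hwlaw i, hwlaw j]
  have law3 : ∀ i j k : Fin n, i ≠ j → i ≠ k → j ≠ k →
      μ.map (fun ω => ((w i ω, w j ω), w k ω)) = (ν.prod ν).prod ν := by
    intro i j k hij hik hjk
    have h := hwiid.indepFun_prodMk hwmeas i j k hik hjk
    rw [indepFun_iff_map_prod_eq_prod_map_map
      ((hwmeas i).prodMk (hwmeas j)).aemeasurable (hwmeas k).aemeasurable] at h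
    rw [h, law2 i j hij, hwlaw k]
  have trans1 : ∀ (i : Fin n) (G : X × Y → ℝ), Measurable G →
      ∫ ω, G (w i ω) ∂μ = ∫ a, G a ∂ν := by
    intro i G hG
    rw [← hwlaw i]
    exact (integral_map (hwmeas i).aemeasurable hG.aestronglyMeasurable).symm
  have trans2 : ∀ (i j : Fin n), i ≠ j → ∀ G : (X × Y) × (X × Y) → ℝ, Measurable G →
      ∫ ω, G (w i ω, w j ω) ∂μ = ∫ p, G p ∂(ν.prod ν) := by
    intro i j hij G hG
    rw [← law2 i j hij]
    exact (integral_map ((hwmeas i).prodMk (hwmeas j)).aemeasurable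
      hG.aestronglyMeasurable).symm
  have trans3 : ∀ (i j k : Fin n), i ≠ j → i ≠ k → j ≠ k →
      ∀ G : ((X × Y) × (X × Y)) × (X × Y) → ℝ, Measurable G →
      ∫ ω, G ((w i ω, w j ω), w k ω) ∂μ = ∫ q, G q ∂((ν.prod ν).prod ν) := by
    intro i j k hij hik hjk G hG
    rw [← law3 i j k hij hik hjk]
    exact (integral_map (((hwmeas i).prodMk (hwmeas j)).prodMk
      (hwmeas k)).aemeasurable hG.aestronglyMeasurable).symm
  have hY : Nonempty Y := by
    by_contra h
    rw [not_nonempty_iff] at h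
    have h1 : Py Set.univ = 1 := measure_univ
    rw [Set.univ_eq_empty_iff.mpr h, measure_empty] at h1
    exact zero_ne_one h1
  have hZne : Nonempty (X × Y) := ⟨(Classical.arbitrary X, Classical.arbitrary Y)⟩
  have hC0 : 0 ≤ C :=
    le_trans (abs_nonneg _) (hFbd (Classical.arbitrary _) (Classical.arbitrary _))
  have hbd2 : ∀ a b a' b' : X × Y, |F a b * F a' b'| ≤ C * C := by
    intro a b a' b'
    rw [abs_mul]
    exact mul_le_mul (hFbd _ _) (hFbd _ _) (abs_nonneg _) hC0
  set m₀ : ℝ := ∫ a, F a a ∂ν with hm₀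
  set Q : ℝ := ∫ a, F a a * F a a ∂ν with hQ
  set R : ℝ := ∫ p : (X × Y) × (X × Y), F p.1 p.2 * F p.1 p.2 ∂(ν.prod ν) with hRdef
  -- pair integrals
  have e2 : ∫ p : (X × Y) × (X × Y), F p.1 p.1 * F p.2 p.2 ∂(ν.prod ν) = m₀ * m₀ :=
    integral_prod_mul (f := fun a => F a a) (g := fun a => F a a)
  have e3 : ∫ p : (X × Y) × (X × Y), F p.1 p.1 * F p.1 p.2 ∂(ν.prod ν) = 0 := by
    apply aux_zero _ _ ((aux_meas hFm measurable_fst measurable_fst).mul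
      (aux_meas hFm measurable_fst measurable_snd)) (C * C) (fun p => hbd2 _ _ _ _)
    intro a
    show ∫ b, F a a * F a b ∂ν = 0
    rw [integral_const_mul, hcentR a, mul_zero]
  have e4 : ∫ p : (X × Y) × (X × Y), F p.1 p.1 * F p.2 p.1 ∂(ν.prod ν) = 0 := by
    apply aux_zero _ _ ((aux_meas hFm measurable_fst measurable_fst).mul
      (aux_meas hFm measurable_snd measurable_fst)) (C * C) (fun p => hbd2 _ _ _ _)
    intro a
    show ∫ b, F a a * F b a ∂ν = 0
    rw [integral_const_mul, hcentL a, mul_zero]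
  have e5 : ∫ p : (X × Y) × (X × Y), F p.1 p.2 * F p.1 p.1 ∂(ν.prod ν) = 0 := by
    apply aux_zero _ _ ((aux_meas hFm measurable_fst measurable_snd).mul
      (aux_meas hFm measurable_fst measurable_fst)) (C * C) (fun p => hbd2 _ _ _ _)
    intro a
    show ∫ b, F a b * F a a ∂ν = 0
    rw [integral_mul_const, hcentR a, zero_mul]
  have e6 : ∫ p : (X × Y) × (X × Y), F p.1 p.2 * F p.2 p.2 ∂(ν.prod ν) = 0 := by
    apply aux_zero' _ _ ((aux_meas hFm measurable_fst measurable_snd).mul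
      (aux_meas hFm measurable_snd measurable_snd)) (C * C) (fun p => hbd2 _ _ _ _)
    intro b
    show ∫ a, F a b * F b b ∂ν = 0
    rw [integral_mul_const, hcentL b, zero_mul]
  have e1 : ∫ p : (X × Y) × (X × Y), F p.1 p.2 ∂(ν.prod ν) = 0 := by
    apply aux_zero _ _ (aux_meas hFm measurable_fst measurable_snd) C (fun p => hFbd _ _)
    exact hcentR
  have e8 : ∫ p : (X × Y) × (X × Y), F p.1 p.2 * F p.2 p.1 ∂(ν.prod ν) = R := by
    rw [hRdef]
    congr 1
    funext p
    rw [hFsymm p.2 p.1]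
  -- triple integrals
  have t1 : ∫ q : ((X × Y) × (X × Y)) × (X × Y),
      F q.1.1 q.1.2 * F q.1.1 q.2 ∂((ν.prod ν).prod ν) = 0 := by
    apply aux_zero _ _ ((aux_meas hFm measurable_fst.fst measurable_fst.snd).mul
      (aux_meas hFm measurable_fst.fst measurable_snd)) (C * C) (fun p => hbd2 _ _ _ _)
    intro ab
    show ∫ c, F ab.1 ab.2 * F ab.1 c ∂ν = 0
    rw [integral_const_mul, hcentR, mul_zero]
  have t2 : ∫ q : ((X × Y) × (X × Y)) × (X × Y),
      F q.1.2 q.2 * F q.1.1 q.1.2 ∂((ν.prod ν).prod ν) = 0 := by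
    apply aux_zero _ _ ((aux_meas hFm measurable_fst.snd measurable_snd).mul
      (aux_meas hFm measurable_fst.fst measurable_fst.snd)) (C * C) (fun p => hbd2 _ _ _ _)
    intro ab
    show ∫ c, F ab.2 c * F ab.1 ab.2 ∂ν = 0
    rw [integral_mul_const, hcentR, zero_mul]
  have t3 : ∫ q : ((X × Y) × (X × Y)) × (X × Y),
      F q.1.1 q.1.2 * F q.1.2 q.2 ∂((ν.prod ν).prod ν) = 0 := by
    apply aux_zero _ _ ((aux_meas hFm measurable_fst.fst measurable_fst.snd).mul
      (aux_meas hFm measurable_fst.snd measurable_snd)) (C * C) (fun p => hbd2 _ _ _ _)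
    intro ab
    show ∫ c, F ab.1 ab.2 * F ab.2 c ∂ν = 0
    rw [integral_const_mul, hcentR, mul_zero]
  have t4 : ∫ q : ((X × Y) × (X × Y)) × (X × Y),
      F q.1.1 q.1.2 * F q.2 q.1.2 ∂((ν.prod ν).prod ν) = 0 := by
    apply aux_zero _ _ ((aux_meas hFm measurable_fst.fst measurable_fst.snd).mul
      (aux_meas hFm measurable_snd measurable_fst.snd)) (C * C) (fun p => hbd2 _ _ _ _)
    intro ab
    show ∫ c, F ab.1 ab.2 * F c ab.2 ∂ν = 0
    rw [integral_const_mul, hcentL, mul_zero]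
  have t5 : ∫ q : ((X × Y) × (X × Y)) × (X × Y),
      F q.1.1 q.1.1 * F q.1.2 q.2 ∂((ν.prod ν).prod ν) = 0 := by
    apply aux_zero _ _ ((aux_meas hFm measurable_fst.fst measurable_fst.fst).mul
      (aux_meas hFm measurable_fst.snd measurable_snd)) (C * C) (fun p => hbd2 _ _ _ _)
    intro ab
    show ∫ c, F ab.1 ab.1 * F ab.2 c ∂ν = 0
    rw [integral_const_mul, hcentR, mul_zero]
  have t6 : ∫ q : ((X × Y) × (X × Y)) × (X × Y),
      F q.1.2 q.2 * F q.1.1 q.1.1 ∂((ν.prod ν).prod ν) = 0 := by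
    apply aux_zero _ _ ((aux_meas hFm measurable_fst.snd measurable_snd).mul
      (aux_meas hFm measurable_fst.fst measurable_fst.fst)) (C * C) (fun p => hbd2 _ _ _ _)
    intro ab
    show ∫ c, F ab.2 c * F ab.1 ab.1 ∂ν = 0
    rw [integral_mul_const, hcentR, zero_mul]
  have hVmeas : ∀ i j : Fin n, Measurable (fun ω => F (w i ω) (w j ω)) :=
    fun i j => aux_meas hFm (hwmeas i) (hwmeas j)
  have hVint : ∀ i j : Fin n, Integrable (fun ω => F (w i ω) (w j ω)) μ :=
    fun i j => aux_integrable μ (hVmeas i j).aestronglyMeasurable C (fun ω => hFbd _ _)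
  have master : ∀ i j k l : Fin n,
      ∫ ω, F (w i ω) (w j ω) * F (w k ω) (w l ω) ∂μ =
      (if i = j ∧ k = l then (if i = k then Q else m₀ * m₀) else 0) +
      (if i ≠ j ∧ ((k = i ∧ l = j) ∨ (k = j ∧ l = i)) then R else 0) := by
    intro i j k l
    by_cases hij : i = j
    · subst hij
      by_cases hkl : k = l
      · subst hkl
        by_cases hik : i = k
        · subst hik
          rw [if_pos ⟨rfl, rfl⟩, if_pos rfl, if_neg (fun h => h.1 rfl), add_zero]
          exact (trans1 i (fun a => F a a * F a a)
            ((aux_meas hFm measurable_id measurable_id).mul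
             (aux_meas hFm measurable_id measurable_id))).trans hQ.symm
        · rw [if_pos ⟨rfl, rfl⟩, if_neg hik, if_neg (fun h => h.1 rfl), add_zero]
          exact (trans2 i k hik (fun p => F p.1 p.1 * F p.2 p.2)
            ((aux_meas hFm measurable_fst measurable_fst).mul
             (aux_meas hFm measurable_snd measurable_snd))).trans e2
      · rw [if_neg (fun h => hkl h.2), if_neg (fun h => h.1 rfl), add_zero]
        by_cases hik : i = k
        · subst hik
          exact (trans2 i l hkl (fun p => F p.1 p.1 * F p.1 p.2)
            ((aux_meas hFm measurable_fst measurable_fst).mul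
             (aux_meas hFm measurable_fst measurable_snd))).trans e3
        · by_cases hil : i = l
          · subst hil
            exact (trans2 i k hik (fun p => F p.1 p.1 * F p.2 p.1)
              ((aux_meas hFm measurable_fst measurable_fst).mul
               (aux_meas hFm measurable_snd measurable_fst))).trans e4
          · exact (trans3 i k l hik hil hkl
              (fun q => F q.1.1 q.1.1 * F q.1.2 q.2)
              ((aux_meas hFm measurable_fst.fst measurable_fst.fst).mul
               (aux_meas hFm measurable_fst.snd measurable_snd))).trans t5
    · by_cases hkl : k = l
      · subst hkl
        rw [if_neg (fun h => hij h.1), if_neg (fun h => by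
            rcases h.2 with ⟨h1, h2⟩ | ⟨h1, h2⟩
            · exact hij (h1.symm.trans h2)
            · exact hij (h2.symm.trans h1)), add_zero]
        by_cases hik : i = k
        · subst hik
          exact (trans2 i j hij (fun p => F p.1 p.2 * F p.1 p.1)
            ((aux_meas hFm measurable_fst measurable_snd).mul
             (aux_meas hFm measurable_fst measurable_fst))).trans e5
        · by_cases hjk : j = k
          · subst hjk
            exact (trans2 i j hij (fun p => F p.1 p.2 * F p.2 p.2)
              ((aux_meas hFm measurable_fst measurable_snd).mul
               (aux_meas hFm measurable_snd measurable_snd))).trans e6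
          · exact (trans3 k i j (fun h => hik h.symm) (fun h => hjk h.symm) hij
              (fun q => F q.1.2 q.2 * F q.1.1 q.1.1)
              ((aux_meas hFm measurable_fst.snd measurable_snd).mul
               (aux_meas hFm measurable_fst.fst measurable_fst.fst))).trans t6
      · by_cases hik : i = k
        · by_cases hjl : j = l
          · subst hik; subst hjl
            rw [if_neg (fun h => hij h.1), if_pos ⟨hij, Or.inl ⟨rfl, rfl⟩⟩, zero_add]
            exact (trans2 i j hij (fun p => F p.1 p.2 * F p.1 p.2)
              ((aux_meas hFm measurable_fst measurable_snd).mul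
               (aux_meas hFm measurable_fst measurable_snd))).trans hRdef.symm
          · subst hik
            rw [if_neg (fun h => hij h.1), if_neg (fun h => by
                rcases h.2 with ⟨-, h2⟩ | ⟨h2, -⟩
                · exact hjl h2.symm
                · exact hij h2), add_zero]
            exact (trans3 i j l hij hkl hjl
              (fun q => F q.1.1 q.1.2 * F q.1.1 q.2)
              ((aux_meas hFm measurable_fst.fst measurable_fst.snd).mul
               (aux_meas hFm measurable_fst.fst measurable_snd))).trans t1
        · by_cases hjk : j = k
          · by_cases hil : i = l
            · subst hjk; subst hil
              rw [if_neg (fun h => hij h.1), if_pos ⟨hij, Or.inr ⟨rfl, rfl⟩⟩, zero_add]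
              exact (trans2 i j hij (fun p => F p.1 p.2 * F p.2 p.1)
                ((aux_meas hFm measurable_fst measurable_snd).mul
                 (aux_meas hFm measurable_snd measurable_fst))).trans e8
            · subst hjk
              rw [if_neg (fun h => hij h.1), if_neg (fun h => by
                  rcases h.2 with ⟨h1, -⟩ | ⟨-, h2⟩
                  · exact hij h1.symm
                  · exact hil h2.symm), add_zero]
              exact (trans3 i j l hij hil hkl
                (fun q => F q.1.1 q.1.2 * F q.1.2 q.2)
                ((aux_meas hFm measurable_fst.fst measurable_fst.snd).mul
                 (aux_meas hFm measurable_fst.snd measurable_snd))).trans t3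
          · by_cases hjl : j = l
            · subst hjl
              rw [if_neg (fun h => hij h.1), if_neg (fun h => by
                  rcases h.2 with ⟨h1, -⟩ | ⟨h1, -⟩
                  · exact hik h1.symm
                  · exact hkl h1), add_zero]
              exact (trans3 i j k hij hik hjk
                (fun q => F q.1.1 q.1.2 * F q.2 q.1.2)
                ((aux_meas hFm measurable_fst.fst measurable_fst.snd).mul
                 (aux_meas hFm measurable_snd measurable_fst.snd))).trans t4
            · by_cases hil : i = l
              · subst hil
                rw [if_neg (fun h => hij h.1), if_neg (fun h => by
                    rcases h.2 with ⟨-, h2⟩ | ⟨h1, -⟩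
                    · exact hij h2
                    · exact hjk h1.symm), add_zero]
                exact (trans3 k i j (fun h => hkl h) (fun h => hjk h.symm) hij
                  (fun q => F q.1.2 q.2 * F q.1.1 q.1.2)
                  ((aux_meas hFm measurable_fst.snd measurable_snd).mul
                   (aux_meas hFm measurable_fst.fst measurable_fst.snd))).trans t2
              · rw [if_neg (fun h => hij h.1), if_neg (fun h => by
                    rcases h.2 with ⟨h1, -⟩ | ⟨h1, -⟩
                    · exact hik h1.symm
                    · exact hjk h1.symm), add_zero]
                have hind : IndepFun (fun ω => (w i ω, w j ω)) (fun ω => (w k ω, w l ω)) μ :=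
                  hwiid.indepFun_prodMk_prodMk hwmeas i j k l hik hil hjk hjl
                have hcomp : IndepFun (fun ω => F (w i ω) (w j ω))
                    (fun ω => F (w k ω) (w l ω)) μ := hind.comp hFm hFm
                have hz1 : ∫ ω, F (w i ω) (w j ω) ∂μ = 0 :=
                  (trans2 i j hij (fun p => F p.1 p.2)
                    (aux_meas hFm measurable_fst measurable_snd)).trans e1
                have := hcomp.integral_mul_eq_mul_integral (hVint i j).aestronglyMeasurable (hVint k l).aestronglyMeasurable
                exact this.trans (by rw [hz1, zero_mul])
  -- counting lemmas
  have sumA : ∀ i k : Fin n,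
      (∑ j : Fin n, ∑ l : Fin n, (if i = j ∧ k = l then (if i = k then Q else m₀ * m₀) else 0))
        = (if i = k then Q else m₀ * m₀) := by
    intro i k
    have h1 : ∀ j : Fin n, (∑ l : Fin n,
        (if i = j ∧ k = l then (if i = k then Q else m₀ * m₀) else 0))
        = if i = j then (if i = k then Q else m₀ * m₀) else 0 := by
      intro j
      by_cases h : i = j
      · simp [h, Finset.sum_ite_eq]
      · simp [h]
    rw [Finset.sum_congr rfl fun j _ => h1 j]
    simp [Finset.sum_ite_eq]
  have sumX : ∀ i : Fin n, (∑ k : Fin n, (if i = k then Q else m₀ * m₀))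
      = (n : ℝ) * (m₀ * m₀) + (Q - m₀ * m₀) := by
    intro i
    have h1 : ∀ k : Fin n, (if i = k then Q else m₀ * m₀)
        = m₀ * m₀ + (if i = k then Q - m₀ * m₀ else 0) := by
      intro k; by_cases h : i = k <;> simp [h]
    rw [Finset.sum_congr rfl fun k _ => h1 k, Finset.sum_add_distrib, Finset.sum_const,
      Finset.card_univ, Fintype.card_fin, nsmul_eq_mul, Finset.sum_ite_eq]
    simp
  have part2j : ∀ i k : Fin n, (∑ j : Fin n, ∑ l : Fin n,
      (if i ≠ j ∧ ((k = i ∧ l = j) ∨ (k = j ∧ l = i)) then R else 0))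
      = (if k = i then ((n : ℝ) * R - R) else R) := by
    intro i k
    have hl : ∀ j : Fin n, (∑ l : Fin n,
        (if i ≠ j ∧ ((k = i ∧ l = j) ∨ (k = j ∧ l = i)) then R else 0))
        = (if i ≠ j ∧ k = i then R else 0) + (if i ≠ j ∧ k = j then R else 0) := by
      intro j
      by_cases hij' : i = j
      · simp [hij']
      · by_cases hki' : k = i
        · have hkj' : ¬k = j := fun h => hij' (hki'.symm.trans h)
          simp [hij', hki', hkj', Finset.sum_ite_eq]
        · by_cases hkj' : k = j
          · simp [hij', hki', hkj', Ne.symm hij', Finset.sum_ite_eq, Finset.sum_ite_eq']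
          · simp [hij', hki', hkj']
    rw [Finset.sum_congr rfl fun j _ => hl j, Finset.sum_add_distrib]
    by_cases hki' : k = i
    · have h1 : ∀ j : Fin n, (if i ≠ j ∧ k = i then R else 0)
          = R - (if i = j then R else 0) := by
        intro j; by_cases h : i = j <;> simp [h, hki']
      have h2 : ∀ j : Fin n, (if i ≠ j ∧ k = j then R else 0) = 0 := by
        intro j
        by_cases h : i = j
        · simp [h]
        · have hkj : ¬k = j := fun hh => h (hki'.symm.trans hh)
          simp [h, hkj]
      rw [Finset.sum_congr rfl fun j _ => h1 j, Finset.sum_congr rfl fun j _ => h2 j,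
        Finset.sum_sub_distrib, Finset.sum_const, Finset.card_univ, Fintype.card_fin,
        nsmul_eq_mul, Finset.sum_ite_eq, if_pos hki']
      simp [Finset.mem_univ]
    · have h1 : ∀ j : Fin n, (if i ≠ j ∧ k = i then R else 0) = 0 := by
        intro j; simp [hki']
      have h2 : ∀ j : Fin n, (if i ≠ j ∧ k = j then R else 0)
          = (if k = j then R else 0) := by
        intro j
        by_cases h : k = j
        · have : i ≠ j := fun hh => hki' (h.trans hh.symm)
          simp [h, this]
        · simp [h]
      rw [Finset.sum_congr rfl fun j _ => h1 j, Finset.sum_congr rfl fun j _ => h2 j,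
        Finset.sum_const_zero, Finset.sum_ite_eq, if_neg hki']
      simp
  have part2k : ∀ i : Fin n, (∑ k : Fin n, (if k = i then ((n : ℝ) * R - R) else R))
      = 2 * (n : ℝ) * R - 2 * R := by
    intro i
    have h1 : ∀ k : Fin n, (if k = i then ((n : ℝ) * R - R) else R)
        = R + (if k = i then (n : ℝ) * R - 2 * R else 0) := by
      intro k; by_cases h : k = i
      · simp [h]; ring
      · simp [h]
    rw [Finset.sum_congr rfl fun k _ => h1 k, Finset.sum_add_distrib, Finset.sum_const,
      Finset.card_univ, Fintype.card_fin, nsmul_eq_mul, Finset.sum_ite_eq']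
    simp
    ring
  -- SV and its moments
  set SV : Ω → ℝ := fun ω => ∑ i : Fin n, ∑ j : Fin n, F (w i ω) (w j ω) with hSV
  have hSVmeas : Measurable SV := by
    rw [hSV]
    exact Finset.measurable_sum _ (fun i _ => Finset.measurable_sum _ (fun j _ => hVmeas i j))
  have hSVbd : ∀ ω, |SV ω| ≤ (n : ℝ) * ((n : ℝ) * C) := by
    intro ω
    rw [hSV]
    refine (Finset.abs_sum_le_sum_abs _ _).trans ?_
    have hrow : ∀ i : Fin n, |∑ j : Fin n, F (w i ω) (w j ω)| ≤ (n : ℝ) * C := by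
      intro i
      refine (Finset.abs_sum_le_sum_abs _ _).trans ?_
      refine (Finset.sum_le_sum (fun j _ => hFbd (w i ω) (w j ω))).trans ?_
      simp [Finset.sum_const, Finset.card_univ, nsmul_eq_mul]
    refine (Finset.sum_le_sum (fun i _ => hrow i)).trans ?_
    simp [Finset.sum_const, Finset.card_univ, nsmul_eq_mul]
  have hEV : ∀ i j : Fin n, ∫ ω, F (w i ω) (w j ω) ∂μ = if i = j then m₀ else 0 := by
    intro i j
    by_cases h : i = j
    · subst h
      rw [if_pos rfl]
      exact (trans1 i (fun a => F a a)
        (aux_meas hFm measurable_id measurable_id)).trans hm₀.symm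
    · rw [if_neg h]
      exact (trans2 i j h (fun p => F p.1 p.2)
        (aux_meas hFm measurable_fst measurable_snd)).trans e1
  have hESV : ∫ ω, SV ω ∂μ = (n : ℝ) * m₀ := by
    rw [hSV, integral_finset_sum _ (fun i _ => integrable_finset_sum _ (fun j _ => hVint i j)),
      Finset.sum_congr rfl (fun i _ => integral_finset_sum _ (fun j _ => hVint i j)),
      Finset.sum_congr rfl (fun i _ => Finset.sum_congr rfl (fun j _ => hEV i j))]
    simp [Finset.sum_ite_eq, Finset.card_univ, nsmul_eq_mul]
  have hVVint : ∀ i j k l : Fin n,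
      Integrable (fun ω => F (w i ω) (w j ω) * F (w k ω) (w l ω)) μ :=
    fun i j k l => aux_integrable μ ((hVmeas i j).mul (hVmeas k l)).aestronglyMeasurable
      (C * C) (fun ω => hbd2 _ _ _ _)
  have hESV2 : ∫ ω, SV ω * SV ω ∂μ
      = (n : ℝ) * ((n : ℝ) * (m₀ * m₀) + (Q - m₀ * m₀))
        + (n : ℝ) * (2 * (n : ℝ) * R - 2 * R) := by
    have hexp : (fun ω => SV ω * SV ω) = fun ω => ∑ i : Fin n, ∑ k : Fin n, ∑ j : Fin n,
        ∑ l : Fin n, F (w i ω) (w j ω) * F (w k ω) (w l ω) := by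
      funext ω
      rw [hSV]
      rw [Finset.sum_mul_sum]
      refine Finset.sum_congr rfl fun i _ => ?_
      refine Finset.sum_congr rfl fun k _ => ?_
      rw [Finset.sum_mul_sum]
    rw [hexp, integral_finset_sum _ (fun i _ => integrable_finset_sum _ (fun k _ =>
        integrable_finset_sum _ (fun j _ => integrable_finset_sum _ (fun l _ =>
        hVVint i j k l)))),
      Finset.sum_congr rfl (fun i _ => integral_finset_sum _ (fun k _ =>
        integrable_finset_sum _ (fun j _ => integrable_finset_sum _ (fun l _ =>
        hVVint i j k l)))),
      Finset.sum_congr rfl (fun i _ => Finset.sum_congr rfl (fun k _ =>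
        integral_finset_sum _ (fun j _ => integrable_finset_sum _ (fun l _ =>
        hVVint i j k l)))),
      Finset.sum_congr rfl (fun i _ => Finset.sum_congr rfl (fun k _ =>
        Finset.sum_congr rfl (fun j _ => integral_finset_sum _ (fun l _ =>
        hVVint i j k l)))),
      Finset.sum_congr rfl (fun i _ => Finset.sum_congr rfl (fun k _ =>
        Finset.sum_congr rfl (fun j _ => Finset.sum_congr rfl (fun l _ =>
        master i j k l))))]
    simp only [Finset.sum_add_distrib]
    rw [Finset.sum_congr rfl (fun i _ => Finset.sum_congr rfl (fun k _ => sumA i k)),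
      Finset.sum_congr rfl (fun i _ => sumX i),
      Finset.sum_congr rfl (fun i _ => Finset.sum_congr rfl (fun k _ => part2j i k)),
      Finset.sum_congr rfl (fun i _ => part2k i),
      Finset.sum_const, Finset.card_univ, Fintype.card_fin, nsmul_eq_mul,
      Finset.sum_const, Finset.card_univ, Fintype.card_fin, nsmul_eq_mul]
  have hn' : (n : ℝ) ≠ 0 := Nat.cast_ne_zero.mpr (Nat.one_le_iff_ne_zero.mp hn)
  have hKint : Integrable (fun q : X × X => Ktil q.1 q.2 * Ktil q.1 q.2) (Px.prod Px) := by
    apply aux_integrable _ (hKmeas.mul hKmeas).aestronglyMeasurable (BK * BK)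
    intro q; rw [Pi.mul_apply, abs_mul]
    exact mul_le_mul (hKbdd _ _) (hKbdd _ _) (abs_nonneg _) hBK0
  have hBL0 : 0 ≤ BL :=
    le_trans (abs_nonneg _) (hLbdd (Classical.arbitrary Y) (Classical.arbitrary Y))
  have hLint : Integrable (fun q : Y × Y => Ltil q.1 q.2 * Ltil q.1 q.2) (Py.prod Py) := by
    apply aux_integrable _ (hLmeas.mul hLmeas).aestronglyMeasurable (BL * BL)
    intro q; rw [Pi.mul_apply, abs_mul]
    exact mul_le_mul (hLbdd _ _) (hLbdd _ _) (abs_nonneg _) hBL0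
  have hKeq : (∫ x', ∫ x, Ktil x' x * Ktil x' x ∂Px ∂Px)
      = ∫ q : X × X, (Ktil q.1 q.2) ^ 2 ∂(Px.prod Px) := by
    rw [show (fun q : X × X => (Ktil q.1 q.2) ^ 2)
        = fun q : X × X => Ktil q.1 q.2 * Ktil q.1 q.2 from funext fun q => by rw [pow_two]]
    exact (integral_prod _ hKint).symm
  have hLeq : (∫ y', ∫ y, Ltil y' y * Ltil y' y ∂Py ∂Py)
      = ∫ q : Y × Y, (Ltil q.1 q.2) ^ 2 ∂(Py.prod Py) := by
    rw [show (fun q : Y × Y => (Ltil q.1 q.2) ^ 2)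
        = fun q : Y × Y => Ltil q.1 q.2 * Ltil q.1 q.2 from funext fun q => by rw [pow_two]]
    exact (integral_prod _ hLint).symm
  have e9 : R = (∫ q : X × X, (Ktil q.1 q.2) ^ 2 ∂(Px.prod Px)) *
      ∫ q : Y × Y, (Ltil q.1 q.2) ^ 2 ∂(Py.prod Py) := by
    have hint : Integrable (fun p : (X × Y) × (X × Y) => F p.1 p.2 * F p.1 p.2) (ν.prod ν) :=
      aux_integrable _ ((aux_meas hFm measurable_fst measurable_snd).mul
        (aux_meas hFm measurable_fst measurable_snd)).aestronglyMeasurable (C * C)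
        (fun p => hbd2 _ _ _ _)
    rw [hRdef]
    calc (∫ p : (X × Y) × (X × Y), F p.1 p.2 * F p.1 p.2 ∂(ν.prod ν))
        = ∫ a, ((∫ x, Ktil a.1 x * Ktil a.1 x ∂Px) * ∫ y, Ltil a.2 y * Ltil a.2 y ∂Py) ∂ν := by
          rw [integral_prod _ hint]
          congr 1
          funext a
          show ∫ b, F a b * F a b ∂ν = _
          rw [hν, show (fun b : X × Y => F a b * F a b)
              = fun b : X × Y => (Ktil a.1 b.1 * Ktil a.1 b.1) * (Ltil a.2 b.2 * Ltil a.2 b.2)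
              from funext fun b => by rw [hF]; ring]
          exact integral_prod_mul (f := fun x => Ktil a.1 x * Ktil a.1 x)
            (g := fun y => Ltil a.2 y * Ltil a.2 y)
      _ = (∫ x', ∫ x, Ktil x' x * Ktil x' x ∂Px ∂Px)
            * ∫ y', ∫ y, Ltil y' y * Ltil y' y ∂Py ∂Py := by
          rw [hν]
          exact integral_prod_mul (f := fun x' => ∫ x, Ktil x' x * Ktil x' x ∂Px)
            (g := fun y' => ∫ y, Ltil y' y * Ltil y' y ∂Py)
      _ = _ := by rw [hKeq, hLeq]
  have hDmem : MemLp (fun p : X × Y => Ktil p.1 p.1 * Ltil p.2 p.2) 2 ν :=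
    MemLp.of_bound (aux_meas hFm measurable_id measurable_id).aestronglyMeasurable C
      (Filter.Eventually.of_forall fun a => by rw [Real.norm_eq_abs]; exact hFbd a a)
  have hvarD : variance (fun p : X × Y => Ktil p.1 p.1 * Ltil p.2 p.2) ν = Q - m₀ * m₀ := by
    rw [variance_eq_sub hDmem]
    have h1 : ν[(fun p : X × Y => Ktil p.1 p.1 * Ltil p.2 p.2) ^ 2] = Q := by
      rw [hQ]; congr 1; funext a; rw [Pi.pow_apply, hF]; ring
    have h2 : ν[fun p : X × Y => Ktil p.1 p.1 * Ltil p.2 p.2] = m₀ := by rw [hm₀]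
    rw [h1, h2]; ring
  have hTn' : Tn = fun ω => (n : ℝ)⁻¹ * SV ω := funext hTn
  rw [hTn']
  have hTmem : MemLp (fun ω => (n : ℝ)⁻¹ * SV ω) 2 μ :=
    MemLp.of_bound (measurable_const.mul hSVmeas).aestronglyMeasurable
      ((n : ℝ)⁻¹ * ((n : ℝ) * ((n : ℝ) * C)))
      (Filter.Eventually.of_forall fun ω => by
        rw [Real.norm_eq_abs, abs_mul, abs_of_nonneg (inv_nonneg.mpr (Nat.cast_nonneg n))]
        exact mul_le_mul_of_nonneg_left (hSVbd ω) (inv_nonneg.mpr (Nat.cast_nonneg n)))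
  rw [variance_eq_sub hTmem]
  have hA : μ[(fun ω => (n : ℝ)⁻¹ * SV ω) ^ 2]
      = ((n : ℝ)⁻¹ * (n : ℝ)⁻¹) * ((n : ℝ) * ((n : ℝ) * (m₀ * m₀) + (Q - m₀ * m₀))
        + (n : ℝ) * (2 * (n : ℝ) * R - 2 * R)) := by
    rw [show (fun ω => (n : ℝ)⁻¹ * SV ω) ^ 2
        = fun ω => ((n : ℝ)⁻¹ * (n : ℝ)⁻¹) * (SV ω * SV ω) from funext fun ω => by
          rw [Pi.pow_apply]; ring]
    rw [integral_const_mul, hESV2]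
  have hB : μ[fun ω => (n : ℝ)⁻¹ * SV ω] = (n : ℝ)⁻¹ * ((n : ℝ) * m₀) := by
    rw [show (μ[fun ω => (n : ℝ)⁻¹ * SV ω]) = (n : ℝ)⁻¹ * ∫ ω, SV ω ∂μ
      from integral_const_mul _ _, hESV]
  rw [hA, hB, hvarD, ← e9]
  field_simp
  ring
end

section
/- Let B_{ij} = K̃(x_i,x_j)L̃(y_i,y_j) for 1 ≤ i < j ≤ n with i.i.d. (x_i,y_i) following the product law P_x ⊗ P_y, where K̃, L̃ are bounded centered kernels. Then E[(∑_{i<j} B_{ij})³] = (n(n-1)/2)·E[B₁₂³] + n(n-1)(n-2)·E[B₁₂B₂₃B₃₁], where E[B₁₂B₂₃B₃₁] = M₃N₃ with M₃ = E[K̃(x,x')K̃(x',x'')K̃(x'',x)] and N₃ = E[L̃(y,y')L̃(y',y'')L̃(y'',y)] for i.i.d. triples. -/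
open MeasureTheory ProbabilityTheory

namespace ThirdMoment



/-- ordered edge on vertices i j -/
def e {n : ℕ} (i j : Fin n) : Fin n × Fin n := if i < j then (i, j) else (j, i)

lemma e_lt {n : ℕ} {i j : Fin n} (h : i < j) : e i j = (i, j) := by
  simp [e, h]

lemma e_gt {n : ℕ} {i j : Fin n} (h : j < i) : e i j = (j, i) := by
  simp [e, not_lt_of_gt h]

lemma e_fst_lt_snd {n : ℕ} {i j : Fin n} (h : i ≠ j) : (e i j).1 < (e i j).2 := by
  rcases lt_or_gt_of_ne h with h' | h'
  · rw [e_lt h']; exact h'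
  · rw [e_gt h']; exact h'

/-- an ordered pair whose vertex set is {i,k} equals `e k i` -/
lemma eq_e_of_mem {n : ℕ} {r : Fin n × Fin n} {i k : Fin n} (hr : r.1 < r.2)
    (hik : i ≠ k) (hi : i = r.1 ∨ i = r.2) (hk : k = r.1 ∨ k = r.2) : r = e k i := by
  rcases lt_or_gt_of_ne hik with h | h
  · rw [e_gt h]; rw [Prod.ext_iff]
    simp only [ne_eq, Fin.ext_iff, Fin.lt_def] at *; omega
  · rw [e_lt h]; rw [Prod.ext_iff]
    simp only [ne_eq, Fin.ext_iff, Fin.lt_def] at *; omega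

lemma e_eq_iff {n : ℕ} {a b c d : Fin n} (hab : a ≠ b) (hcd : c ≠ d) (h : e a b = e c d) :
    (a = c ∧ b = d) ∨ (a = d ∧ b = c) := by
  unfold e at h
  split_ifs at h <;>
    (rw [Prod.ext_iff] at h;
     simp only [ne_eq, Fin.ext_iff, Fin.lt_def, not_lt] at *; omega)

def memv {n : ℕ} (v : Fin n) (a : Fin n × Fin n) : Prop := v = a.1 ∨ v = a.2

instance {n : ℕ} (v : Fin n) (a : Fin n × Fin n) : Decidable (memv v a) := by
  unfold memv; infer_instance

set_option maxHeartbeats 2000000 in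
/-- classification: three ordered edges, no vertex of degree one,
not all edges equal => they form a triangle (in cyclic order). -/
lemma classify {n : ℕ} {p q r : Fin n × Fin n} (hp : p.1 < p.2) (hq : q.1 < q.2)
    (hr : r.1 < r.2) (hne : ¬(q = p ∧ r = p))
    (hdeg : ∀ v : Fin n, ¬((memv v p ∧ ¬memv v q ∧ ¬memv v r) ∨
      (¬memv v p ∧ memv v q ∧ ¬memv v r) ∨ (¬memv v p ∧ ¬memv v q ∧ memv v r))) :
    ∃ i j k : Fin n, i ≠ j ∧ j ≠ k ∧ i ≠ k ∧ p = e i j ∧ q = e j k ∧ r = e k i := by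
  classical
  obtain ⟨p1, p2⟩ := p
  obtain ⟨q1, q2⟩ := q
  obtain ⟨r1, r2⟩ := r
  have d1 := hdeg p1
  have d2 := hdeg p2
  have d3 := hdeg q1
  have d4 := hdeg q2
  have d5 := hdeg r1
  have d6 := hdeg r2
  clear hdeg
  simp only [memv, ne_eq, Prod.ext_iff, Fin.ext_iff, Fin.lt_def, not_or, not_and, not_not,
    true_or, or_true, not_true, not_false_iff, true_and, and_true, false_and, and_false,
    true_implies, false_implies, imp_false] at d1 d2 d3 d4 d5 d6 hne hp hq hr
  by_cases hpq : (p1 : ℕ) = q1 ∧ (p2 : ℕ) = q2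
  · exfalso; clear d1 d2 d3 d4; omega
  by_cases hqr : (q1 : ℕ) = r1 ∧ (q2 : ℕ) = r2
  · exfalso; clear d3 d4 d5 d6; omega
  by_cases hpr : (p1 : ℕ) = r1 ∧ (p2 : ℕ) = r2
  · exfalso; clear d1 d2 d5 d6; omega
  have hshare : ((p1 : ℕ) = q1 ∨ (p1 : ℕ) = q2) ∨ ((p2 : ℕ) = q1 ∨ (p2 : ℕ) = q2) := by
    clear d3 d4 d5 d6; omega
  rcases hshare with hC | hC <;> rcases hC with C | C
  · -- j = p1 = q1, i = p2, k = q2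
    have f1 : (p2 : ℕ) = r1 ∨ (p2 : ℕ) = r2 := by clear d1 d3 d4 d5 d6; omega
    have f2 : (q2 : ℕ) = r1 ∨ (q2 : ℕ) = r2 := by clear d1 d2 d3 d5 d6; omega
    have f3 : (p2 : ℕ) ≠ q2 := by clear d1 d2 d3 d4 d5 d6; omega
    clear d1 d2 d3 d4 d5 d6 hne hqr hpr
    refine ⟨p2, p1, q2, ?_, ?_, ?_, ?_, ?_, ?_⟩
    · simp only [ne_eq, Fin.ext_iff]; omega
    · simp only [ne_eq, Fin.ext_iff]; omega
    · simp only [ne_eq, Fin.ext_iff]; omega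
    · rw [e_gt (show p1 < p2 by simp only [Fin.lt_def]; omega)]
    · rw [e_lt (show p1 < q2 by simp only [Fin.lt_def]; omega)]
      rw [Prod.ext_iff]; simp only [Fin.ext_iff, and_true, true_and]; omega
    · exact eq_e_of_mem (by simp only [Fin.lt_def]; omega)
        (by simp only [ne_eq, Fin.ext_iff]; omega)
        (by simp only [Fin.ext_iff]; omega)
        (by simp only [Fin.ext_iff]; omega)
  · -- j = p1 = q2, i = p2, k = q1
    have f1 : (p2 : ℕ) = r1 ∨ (p2 : ℕ) = r2 := by clear d1 d3 d4 d5 d6; omega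
    have f2 : (q1 : ℕ) = r1 ∨ (q1 : ℕ) = r2 := by clear d1 d2 d4 d5 d6; omega
    have f3 : (p2 : ℕ) ≠ q1 := by clear d1 d2 d3 d4 d5 d6; omega
    clear d1 d2 d3 d4 d5 d6 hne hqr hpr
    refine ⟨p2, p1, q1, ?_, ?_, ?_, ?_, ?_, ?_⟩
    · simp only [ne_eq, Fin.ext_iff]; omega
    · simp only [ne_eq, Fin.ext_iff]; omega
    · simp only [ne_eq, Fin.ext_iff]; omega
    · rw [e_gt (show p1 < p2 by simp only [Fin.lt_def]; omega)]
    · rw [e_gt (show q1 < p1 by simp only [Fin.lt_def]; omega)]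
      rw [Prod.ext_iff]; simp only [Fin.ext_iff, and_true, true_and]; omega
    · exact eq_e_of_mem (by simp only [Fin.lt_def]; omega)
        (by simp only [ne_eq, Fin.ext_iff]; omega)
        (by simp only [Fin.ext_iff]; omega)
        (by simp only [Fin.ext_iff]; omega)
  · -- j = p2 = q1, i = p1, k = q2
    have f1 : (p1 : ℕ) = r1 ∨ (p1 : ℕ) = r2 := by clear d2 d3 d4 d5 d6; omega
    have f2 : (q2 : ℕ) = r1 ∨ (q2 : ℕ) = r2 := by clear d1 d2 d3 d5 d6; omega
    have f3 : (p1 : ℕ) ≠ q2 := by clear d1 d2 d3 d4 d5 d6; omega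
    clear d1 d2 d3 d4 d5 d6 hne hqr hpr
    refine ⟨p1, p2, q2, ?_, ?_, ?_, ?_, ?_, ?_⟩
    · simp only [ne_eq, Fin.ext_iff]; omega
    · simp only [ne_eq, Fin.ext_iff]; omega
    · simp only [ne_eq, Fin.ext_iff]; omega
    · rw [e_lt (show p1 < p2 by simp only [Fin.lt_def]; omega)]
    · rw [e_lt (show p2 < q2 by simp only [Fin.lt_def]; omega)]
      rw [Prod.ext_iff]; simp only [Fin.ext_iff, and_true, true_and]; omega
    · exact eq_e_of_mem (by simp only [Fin.lt_def]; omega)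
        (by simp only [ne_eq, Fin.ext_iff]; omega)
        (by simp only [Fin.ext_iff]; omega)
        (by simp only [Fin.ext_iff]; omega)
  · -- j = p2 = q2, i = p1, k = q1
    have f1 : (p1 : ℕ) = r1 ∨ (p1 : ℕ) = r2 := by clear d2 d3 d4 d5 d6; omega
    have f2 : (q1 : ℕ) = r1 ∨ (q1 : ℕ) = r2 := by clear d1 d2 d4 d5 d6; omega
    have f3 : (p1 : ℕ) ≠ q1 := by clear d1 d2 d3 d4 d5 d6; omega
    clear d1 d2 d3 d4 d5 d6 hne hqr hpr
    refine ⟨p1, p2, q1, ?_, ?_, ?_, ?_, ?_, ?_⟩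
    · simp only [ne_eq, Fin.ext_iff]; omega
    · simp only [ne_eq, Fin.ext_iff]; omega
    · simp only [ne_eq, Fin.ext_iff]; omega
    · rw [e_lt (show p1 < p2 by simp only [Fin.lt_def]; omega)]
    · rw [e_gt (show q1 < p2 by simp only [Fin.lt_def]; omega)]
      rw [Prod.ext_iff]; simp only [Fin.ext_iff, and_true, true_and]; omega
    · exact eq_e_of_mem (by simp only [Fin.lt_def]; omega)
        (by simp only [ne_eq, Fin.ext_iff]; omega)
        (by simp only [Fin.ext_iff]; omega)
        (by simp only [Fin.ext_iff]; omega)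


lemma card_S (n : ℕ) :
    2 * (Finset.univ.filter (fun q : Fin n × Fin n => q.1 < q.2)).card = n * n - n := by
  classical
  set S := Finset.univ.filter (fun q : Fin n × Fin n => q.1 < q.2) with hS
  have hcard : (Finset.univ : Finset (Fin n)).offDiag = S ∪ S.image Prod.swap := by
    ext q
    simp only [Finset.mem_offDiag, Finset.mem_union, Finset.mem_image, hS, Finset.mem_filter,
      Finset.mem_univ, true_and]
    constructor
    · intro hne
      rcases lt_or_gt_of_ne hne with h | h
      · exact Or.inl h
      · exact Or.inr ⟨q.swap, h, q.swap_swap⟩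
    · rintro (h | ⟨a, ha, rfl⟩)
      · exact ne_of_lt h
      · exact (ne_of_lt ha).symm
  have hdisj : Disjoint S (S.image Prod.swap) := by
    rw [Finset.disjoint_left]
    rintro q hq hq'
    simp only [hS, Finset.mem_filter, Finset.mem_univ, true_and, Finset.mem_image] at hq hq'
    obtain ⟨a, ha, rfl⟩ := hq'
    exact absurd hq (not_lt_of_gt ha)
  have himg : (S.image Prod.swap).card = S.card :=
    Finset.card_image_of_injective _ Prod.swap_injective
  have := congrArg Finset.card hcard
  rw [Finset.card_union_of_disjoint hdisj, himg, Finset.offDiag_card, Finset.card_univ,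
    Fintype.card_fin] at this
  omega

lemma card_D (n : ℕ) :
    (Finset.univ.filter (fun t : Fin n × Fin n × Fin n =>
      t.1 ≠ t.2.1 ∧ t.1 ≠ t.2.2 ∧ t.2.1 ≠ t.2.2)).card = n * ((n-1) * (n-1) - (n-1)) := by
  classical
  have hset : Finset.univ.filter (fun t : Fin n × Fin n × Fin n =>
      t.1 ≠ t.2.1 ∧ t.1 ≠ t.2.2 ∧ t.2.1 ≠ t.2.2) =
      Finset.univ.biUnion (fun i : Fin n =>
        ((Finset.univ.erase i).offDiag).image (fun p => (i, p.1, p.2))) := by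
    ext t
    simp only [Finset.mem_filter, Finset.mem_univ, true_and, Finset.mem_biUnion,
      Finset.mem_image, Finset.mem_offDiag, Finset.mem_erase, and_true]
    constructor
    · rintro ⟨h1, h2, h3⟩
      exact ⟨t.1, (t.2.1, t.2.2), ⟨h1.symm, h2.symm, h3⟩, rfl⟩
    · rintro ⟨i, p, ⟨hp1, hp2, hp3⟩, rfl⟩
      exact ⟨hp1.symm, hp2.symm, hp3⟩
  rw [hset, Finset.card_biUnion]
  · have : ∀ i : Fin n,
        (((Finset.univ.erase i).offDiag).image (fun p : Fin n × Fin n => (i, p.1, p.2))).card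
          = (n-1) * (n-1) - (n-1) := by
      intro i
      rw [Finset.card_image_of_injective, Finset.offDiag_card,
        Finset.card_erase_of_mem (Finset.mem_univ i), Finset.card_univ, Fintype.card_fin]
      intro a b hab
      simpa [Prod.ext_iff] using hab
    simp only [this, Finset.sum_const, Finset.card_univ, Fintype.card_fin, smul_eq_mul]
  · intro a _ b _ hab
    simp only [Finset.disjoint_left, Finset.mem_image]
    rintro t ⟨p, -, rfl⟩ ⟨p', -, ht⟩
    exact hab (congrArg Prod.fst ht).symm


variable {X Y : Type*} [MeasurableSpace X] [MeasurableSpace Y]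

lemma nonempty_of_prob {α : Type*} [MeasurableSpace α] (m : Measure α)
    [IsProbabilityMeasure m] : Nonempty α := by
  by_contra h
  rw [not_nonempty_iff] at h
  have h1 : m Set.univ = 1 := measure_univ
  rw [Set.univ_eq_empty_iff.mpr h] at h1
  simp at h1

lemma integrable_of_bdd {α : Type*} [MeasurableSpace α] {m : Measure α} [IsFiniteMeasure m]
    {f : α → ℝ} (hf : AEStronglyMeasurable f m) {C : ℝ} (h : ∀ a, |f a| ≤ C) :
    Integrable f m :=
  (integrable_const C).mono' hf (Filter.Eventually.of_forall fun a => by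
    simpa [Real.norm_eq_abs] using h a)

lemma measK {K : X → X → ℝ} (hK : Measurable (Function.uncurry K))
    {α : Type*} [MeasurableSpace α] {f g : α → X} (hf : Measurable f) (hg : Measurable g) :
    Measurable fun a => K (f a) (g a) := hK.comp (hf.prodMk hg)

lemma factor3 (Px : Measure X) (Py : Measure Y)
    [IsProbabilityMeasure Px] [IsProbabilityMeasure Py]
    (f : X → X → X → ℝ) (g : Y → Y → Y → ℝ)
    (hf : Measurable fun p : X × X × X => f p.1 p.2.1 p.2.2)
    (hg : Measurable fun p : Y × Y × Y => g p.1 p.2.1 p.2.2)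
    {Cf Cg : ℝ} (hCf : ∀ a b c, |f a b c| ≤ Cf) (hCg : ∀ a b c, |g a b c| ≤ Cg) :
    (∫ q : (X × Y) × (X × Y) × (X × Y), f q.1.1 q.2.1.1 q.2.2.1 * g q.1.2 q.2.1.2 q.2.2.2
        ∂((Px.prod Py).prod ((Px.prod Py).prod (Px.prod Py))))
      = (∫ p : X × X × X, f p.1 p.2.1 p.2.2 ∂(Px.prod (Px.prod Px))) *
        (∫ p : Y × Y × Y, g p.1 p.2.1 p.2.2 ∂(Py.prod (Py.prod Py))) := by
  obtain ⟨x0⟩ := nonempty_of_prob Px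
  obtain ⟨y0⟩ := nonempty_of_prob Py
  have hCf0 : 0 ≤ Cf := (abs_nonneg _).trans (hCf x0 x0 x0)
  have hCg0 : 0 ≤ Cg := (abs_nonneg _).trans (hCg y0 y0 y0)
  have hbd : ∀ (a b c : X) (d e' f' : Y), |f a b c * g d e' f'| ≤ Cf * Cg := by
    intro a b c d e' f'
    rw [abs_mul]
    exact mul_le_mul (hCf a b c) (hCg d e' f') (abs_nonneg _) hCf0
  -- measurability of the joint integrand
  have m1 : Measurable (fun q : (X × Y) × (X × Y) × (X × Y) => f q.1.1 q.2.1.1 q.2.2.1) :=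
    hf.comp ((measurable_fst.fst).prodMk
      ((measurable_snd.fst.fst).prodMk (measurable_snd.snd.fst)))
  have m2 : Measurable (fun q : (X × Y) × (X × Y) × (X × Y) => g q.1.2 q.2.1.2 q.2.2.2) :=
    hg.comp ((measurable_fst.snd).prodMk
      ((measurable_snd.fst.snd).prodMk (measurable_snd.snd.snd)))
  have hint : Integrable (fun q : (X × Y) × (X × Y) × (X × Y) =>
      f q.1.1 q.2.1.1 q.2.2.1 * g q.1.2 q.2.1.2 q.2.2.2)
      ((Px.prod Py).prod ((Px.prod Py).prod (Px.prod Py))) :=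
    integrable_of_bdd (m1.mul m2).aestronglyMeasurable (fun q => hbd _ _ _ _ _ _)
  rw [integral_prod _ hint]
  have key : ∀ u : X × Y,
      (∫ v : (X × Y) × (X × Y), f u.1 v.1.1 v.2.1 * g u.2 v.1.2 v.2.2
          ∂((Px.prod Py).prod (Px.prod Py)))
        = (∫ b, (∫ c, f u.1 b c ∂Px) ∂Px) * (∫ b, (∫ c, g u.2 b c ∂Py) ∂Py) := by
    intro u
    have mv1 : Measurable (fun v : (X × Y) × (X × Y) => f u.1 v.1.1 v.2.1) :=
      hf.comp (measurable_const.prodMk ((measurable_fst.fst).prodMk (measurable_snd.fst)))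
    have mv2 : Measurable (fun v : (X × Y) × (X × Y) => g u.2 v.1.2 v.2.2) :=
      hg.comp (measurable_const.prodMk ((measurable_fst.snd).prodMk (measurable_snd.snd)))
    have hintv : Integrable (fun v : (X × Y) × (X × Y) =>
        f u.1 v.1.1 v.2.1 * g u.2 v.1.2 v.2.2) ((Px.prod Py).prod (Px.prod Py)) :=
      integrable_of_bdd (mv1.mul mv2).aestronglyMeasurable (fun v => hbd _ _ _ _ _ _)
    rw [integral_prod _ hintv]
    have hin : ∀ v1 : X × Y,
        (∫ v2 : X × Y, f u.1 v1.1 v2.1 * g u.2 v1.2 v2.2 ∂(Px.prod Py))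
          = (∫ c, f u.1 v1.1 c ∂Px) * (∫ c, g u.2 v1.2 c ∂Py) := fun v1 =>
      integral_prod_mul (f := fun c => f u.1 v1.1 c) (g := fun c => g u.2 v1.2 c)
    simp_rw [hin]
    exact integral_prod_mul (f := fun b => ∫ c, f u.1 b c ∂Px)
      (g := fun b => ∫ c, g u.2 b c ∂Py)
  simp_rw [key]
  rw [integral_prod_mul (f := fun a => ∫ b, (∫ c, f a b c ∂Px) ∂Px)
    (g := fun a => ∫ b, (∫ c, g a b c ∂Py) ∂Py)]
  congr 1
  · have hint3 : Integrable (fun p : X × X × X => f p.1 p.2.1 p.2.2) (Px.prod (Px.prod Px)) :=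
      integrable_of_bdd hf.aestronglyMeasurable (fun p => hCf _ _ _)
    rw [integral_prod _ hint3]
    refine integral_congr_ae (Filter.Eventually.of_forall fun a => ?_)
    have hint2 : Integrable (fun p : X × X => f a p.1 p.2) (Px.prod Px) :=
      integrable_of_bdd (hf.comp (measurable_const.prodMk measurable_id)).aestronglyMeasurable
        (fun p => hCf _ _ _)
    show (∫ b, (∫ c, f a b c ∂Px) ∂Px) = ∫ p : X × X, f a p.1 p.2 ∂(Px.prod Px)
    rw [integral_prod _ hint2]
  · have hint3 : Integrable (fun p : Y × Y × Y => g p.1 p.2.1 p.2.2) (Py.prod (Py.prod Py)) :=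
      integrable_of_bdd hg.aestronglyMeasurable (fun p => hCg _ _ _)
    rw [integral_prod _ hint3]
    refine integral_congr_ae (Filter.Eventually.of_forall fun a => ?_)
    have hint2 : Integrable (fun p : Y × Y => g a p.1 p.2) (Py.prod Py) :=
      integrable_of_bdd (hg.comp (measurable_const.prodMk measurable_id)).aestronglyMeasurable
        (fun p => hCg _ _ _)
    show (∫ b, (∫ c, g a b c ∂Py) ∂Py) = ∫ p : Y × Y, g a p.1 p.2 ∂(Py.prod Py)
    rw [integral_prod _ hint2]


variable {Ω : Type*} [MeasurableSpace Ω] {μ : Measure Ω} [IsProbabilityMeasure μ]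

lemma law_pair {n : ℕ} {w : Fin n → Ω → X × Y} (hwmeas : ∀ i, Measurable (w i))
    (hwiid : iIndepFun w μ)
    {Px : Measure X} {Py : Measure Y} (hwlaw : ∀ i, μ.map (w i) = Px.prod Py)
    {i j : Fin n} (hij : i ≠ j) :
    μ.map (fun ω => (w i ω, w j ω)) = (Px.prod Py).prod (Px.prod Py) := by
  rw [(indepFun_iff_map_prod_eq_prod_map_map
    (hwmeas i).aemeasurable (hwmeas j).aemeasurable).mp
    (hwiid.indepFun hij), hwlaw, hwlaw]

lemma law_triple {n : ℕ} {w : Fin n → Ω → X × Y} (hwmeas : ∀ i, Measurable (w i))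
    (hwiid : iIndepFun w μ)
    {Px : Measure X} {Py : Measure Y} (hwlaw : ∀ i, μ.map (w i) = Px.prod Py)
    {i j k : Fin n} (hij : i ≠ j) (hik : i ≠ k) (hjk : j ≠ k) :
    μ.map (fun ω => (w i ω, w j ω, w k ω)) =
      (Px.prod Py).prod ((Px.prod Py).prod (Px.prod Py)) := by
  have hpair : IndepFun (w i) (fun ω => (w j ω, w k ω)) μ :=
    (hwiid.indepFun_prodMk hwmeas j k i hij.symm hik.symm).symm
  rw [(indepFun_iff_map_prod_eq_prod_map_map (hwmeas i).aemeasurable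
      ((hwmeas j).prodMk (hwmeas k)).aemeasurable).mp hpair, hwlaw,
    law_pair hwmeas hwiid hwlaw hjk]


/-- the product kernel evaluated on samples i j -/
def bb {n : ℕ} (Ktil : X → X → ℝ) (Ltil : Y → Y → ℝ) (w : Fin n → Ω → X × Y)
    (i j : Fin n) (ω : Ω) : ℝ :=
  Ktil (w i ω).1 (w j ω).1 * Ltil (w i ω).2 (w j ω).2

section Terms

variable (Px : Measure X) (Py : Measure Y)
  [IsProbabilityMeasure Px] [IsProbabilityMeasure Py]
  {Ktil : X → X → ℝ} {Ltil : Y → Y → ℝ}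
  {n : ℕ} {w : Fin n → Ω → X × Y}

lemma diag_term (hKmeas : Measurable (Function.uncurry Ktil))
    (hLmeas : Measurable (Function.uncurry Ltil))
    (hwmeas : ∀ i, Measurable (w i))
    (hwiid : iIndepFun w μ)
    (hwlaw : ∀ i, μ.map (w i) = Px.prod Py)
    {i j : Fin n} (hij : i ≠ j) :
    ∫ ω, (bb Ktil Ltil w i j ω) ^ 3 ∂μ =
      ∫ q : (X × Y) × (X × Y), (Ktil q.1.1 q.2.1 * Ltil q.1.2 q.2.2) ^ 3
        ∂((Px.prod Py).prod (Px.prod Py)) := by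
  have hφ : Measurable (fun q : (X × Y) × (X × Y) =>
      (Ktil q.1.1 q.2.1 * Ltil q.1.2 q.2.2) ^ 3) :=
    ((measK hKmeas measurable_fst.fst measurable_snd.fst).mul
      (measK hLmeas measurable_fst.snd measurable_snd.snd)).pow measurable_const
  rw [← law_pair hwmeas hwiid hwlaw hij,
    integral_map ((hwmeas i).prodMk (hwmeas j)).aemeasurable hφ.aestronglyMeasurable]
  rfl

lemma tri_term (hKmeas : Measurable (Function.uncurry Ktil))
    (hLmeas : Measurable (Function.uncurry Ltil))
    (hwmeas : ∀ i, Measurable (w i))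
    (hwiid : iIndepFun w μ)
    (hwlaw : ∀ i, μ.map (w i) = Px.prod Py)
    {i j k : Fin n} (hij : i ≠ j) (hik : i ≠ k) (hjk : j ≠ k) :
    ∫ ω, bb Ktil Ltil w i j ω * (bb Ktil Ltil w j k ω * bb Ktil Ltil w k i ω) ∂μ =
      ∫ q : (X × Y) × (X × Y) × (X × Y),
        (Ktil q.1.1 q.2.1.1 * Ltil q.1.2 q.2.1.2) *
          (Ktil q.2.1.1 q.2.2.1 * Ltil q.2.1.2 q.2.2.2) *
            (Ktil q.2.2.1 q.1.1 * Ltil q.2.2.2 q.1.2)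
          ∂((Px.prod Py).prod ((Px.prod Py).prod (Px.prod Py))) := by
  have hφ : Measurable (fun q : (X × Y) × (X × Y) × (X × Y) =>
      (Ktil q.1.1 q.2.1.1 * Ltil q.1.2 q.2.1.2) *
        (Ktil q.2.1.1 q.2.2.1 * Ltil q.2.1.2 q.2.2.2) *
          (Ktil q.2.2.1 q.1.1 * Ltil q.2.2.2 q.1.2)) := by
    refine Measurable.mul (Measurable.mul ?_ ?_) ?_
    · exact (measK hKmeas measurable_fst.fst measurable_snd.fst.fst).mul
        (measK hLmeas measurable_fst.snd measurable_snd.fst.snd)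
    · exact (measK hKmeas measurable_snd.fst.fst measurable_snd.snd.fst).mul
        (measK hLmeas measurable_snd.fst.snd measurable_snd.snd.snd)
    · exact (measK hKmeas measurable_snd.snd.fst measurable_fst.fst).mul
        (measK hLmeas measurable_snd.snd.snd measurable_fst.snd)
  have hre : (fun ω => bb Ktil Ltil w i j ω * (bb Ktil Ltil w j k ω * bb Ktil Ltil w k i ω))
      = fun ω => (bb Ktil Ltil w i j ω * bb Ktil Ltil w j k ω) * bb Ktil Ltil w k i ω := by
    funext ω; ring
  rw [hre, ← law_triple hwmeas hwiid hwlaw hij hik hjk,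
    integral_map ((hwmeas i).prodMk ((hwmeas j).prodMk (hwmeas k))).aemeasurable
      hφ.aestronglyMeasurable]
  rfl

lemma zero_term (hKmeas : Measurable (Function.uncurry Ktil))
    (hLmeas : Measurable (Function.uncurry Ltil))
    {BK BL : ℝ} (hKbdd : ∀ x x', |Ktil x x'| ≤ BK) (hLbdd : ∀ y y', |Ltil y y'| ≤ BL)
    (hKcent : ∀ x', (∫ x, Ktil x x' ∂Px) = 0)
    (hwmeas : ∀ i, Measurable (w i))
    (hwiid : iIndepFun w μ)
    (hwlaw : ∀ i, μ.map (w i) = Px.prod Py)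
    {v u a2 b2 a3 b3 : Fin n} (h1 : v ≠ u) (h2 : v ≠ a2) (h3 : v ≠ b2)
    (h4 : v ≠ a3) (h5 : v ≠ b3) :
    ∫ ω, bb Ktil Ltil w v u ω *
        (bb Ktil Ltil w a2 b2 ω * bb Ktil Ltil w a3 b3 ω) ∂μ = 0 := by
  classical
  obtain ⟨x0⟩ := nonempty_of_prob Px
  obtain ⟨y0⟩ := nonempty_of_prob Py
  have hBK0 : 0 ≤ BK := (abs_nonneg _).trans (hKbdd x0 x0)
  have hBL0 : 0 ≤ BL := (abs_nonneg _).trans (hLbdd y0 y0)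
  set T : Ω → (X × Y) × (X × Y) × (X × Y) × (X × Y) × (X × Y) :=
    fun ω => (w u ω, w a2 ω, w b2 ω, w a3 ω, w b3 ω) with hT_def
  have hT : Measurable T :=
    (hwmeas u).prodMk ((hwmeas a2).prodMk ((hwmeas b2).prodMk
      ((hwmeas a3).prodMk (hwmeas b3))))
  have hTprob : IsProbabilityMeasure (μ.map T) := Measure.isProbabilityMeasure_map hT.aemeasurable
  -- independence of w v and T
  have hdisj : Disjoint ({v} : Finset (Fin n)) ({u, a2, b2, a3, b3} : Finset (Fin n)) := by
    simp only [Finset.disjoint_left, Finset.mem_singleton, Finset.mem_insert,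
      Finset.mem_singleton]
    rintro x rfl
    push_neg
    exact ⟨h1, h2, h3, h4, h5⟩
  have hfin := hwiid.indepFun_finset {v} {u, a2, b2, a3, b3} hdisj hwmeas
  have hindep : IndepFun (w v) T μ := by
    have hu : u ∈ ({u, a2, b2, a3, b3} : Finset (Fin n)) := by simp
    have ha2 : a2 ∈ ({u, a2, b2, a3, b3} : Finset (Fin n)) := by simp
    have hb2 : b2 ∈ ({u, a2, b2, a3, b3} : Finset (Fin n)) := by simp
    have ha3 : a3 ∈ ({u, a2, b2, a3, b3} : Finset (Fin n)) := by simp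
    have hb3 : b3 ∈ ({u, a2, b2, a3, b3} : Finset (Fin n)) := by simp
    have hc := hfin.comp (_mγ := inferInstance) (_mγ' := inferInstance)
      (φ := fun t : ({v} : Finset (Fin n)) → X × Y => t ⟨v, Finset.mem_singleton_self v⟩)
      (ψ := fun t : ({u, a2, b2, a3, b3} : Finset (Fin n)) → X × Y =>
        (t ⟨u, hu⟩, t ⟨a2, ha2⟩, t ⟨b2, hb2⟩, t ⟨a3, ha3⟩, t ⟨b3, hb3⟩))
      (measurable_pi_apply _)
      (((measurable_pi_apply _)).prodMk ((measurable_pi_apply _).prodMk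
        ((measurable_pi_apply _).prodMk ((measurable_pi_apply _).prodMk
          (measurable_pi_apply _)))))
    exact hc
  have hmap : μ.map (fun ω => (w v ω, T ω)) = (Px.prod Py).prod (μ.map T) := by
    rw [(indepFun_iff_map_prod_eq_prod_map_map (hwmeas v).aemeasurable
      hT.aemeasurable).mp hindep, hwlaw]
  set φ : (X × Y) × (X × Y) × (X × Y) × (X × Y) × (X × Y) × (X × Y) → ℝ :=
    fun z => (Ktil z.1.1 z.2.1.1 * Ltil z.1.2 z.2.1.2) *
      ((Ktil z.2.2.1.1 z.2.2.2.1.1 * Ltil z.2.2.1.2 z.2.2.2.1.2) *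
       (Ktil z.2.2.2.2.1.1 z.2.2.2.2.2.1 * Ltil z.2.2.2.2.1.2 z.2.2.2.2.2.2)) with hφ_def
  have hφmeas : Measurable φ := by
    refine Measurable.mul ?_ (Measurable.mul ?_ ?_)
    · exact (measK hKmeas measurable_fst.fst measurable_snd.fst.fst).mul
        (measK hLmeas measurable_fst.snd measurable_snd.fst.snd)
    · exact (measK hKmeas measurable_snd.snd.fst.fst
          measurable_snd.snd.snd.fst.fst).mul
        (measK hLmeas measurable_snd.snd.fst.snd measurable_snd.snd.snd.fst.snd)
    · exact (measK hKmeas measurable_snd.snd.snd.snd.fst.fst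
          measurable_snd.snd.snd.snd.snd.fst).mul
        (measK hLmeas measurable_snd.snd.snd.snd.fst.snd
          measurable_snd.snd.snd.snd.snd.snd)
  have hφbd : ∀ z, |φ z| ≤ (BK * BL) * ((BK * BL) * (BK * BL)) := by
    intro z
    simp only [hφ_def, abs_mul]
    have hKL : 0 ≤ BK * BL := mul_nonneg hBK0 hBL0
    gcongr <;> first
      | exact hKbdd _ _
      | exact hLbdd _ _
  have hφint : Integrable φ ((Px.prod Py).prod (μ.map T)) :=
    integrable_of_bdd hφmeas.aestronglyMeasurable hφbd
  have hrew : (fun ω => bb Ktil Ltil w v u ω *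
      (bb Ktil Ltil w a2 b2 ω * bb Ktil Ltil w a3 b3 ω))
      = fun ω => φ (w v ω, T ω) := rfl
  calc ∫ ω, bb Ktil Ltil w v u ω *
      (bb Ktil Ltil w a2 b2 ω * bb Ktil Ltil w a3 b3 ω) ∂μ
      = ∫ ω, φ (w v ω, T ω) ∂μ := by rw [hrew]
    _ = ∫ z, φ z ∂(μ.map (fun ω => (w v ω, T ω))) :=
        (integral_map ((hwmeas v).prodMk hT).aemeasurable
          hφmeas.aestronglyMeasurable).symm
    _ = ∫ z, φ z ∂((Px.prod Py).prod (μ.map T)) := by rw [hmap]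
    _ = ∫ t, (∫ a, φ (a, t) ∂(Px.prod Py)) ∂(μ.map T) := integral_prod_symm φ hφint
    _ = 0 := by
        have hz : ∀ t : (X × Y) × (X × Y) × (X × Y) × (X × Y) × (X × Y),
            (∫ a, φ (a, t) ∂(Px.prod Py)) = 0 := by
          intro t
          have : (fun a : X × Y => φ (a, t)) = fun a =>
              (Ktil a.1 t.1.1 * Ltil a.2 t.1.2) *
              ((Ktil t.2.1.1 t.2.2.1.1 * Ltil t.2.1.2 t.2.2.1.2) *
               (Ktil t.2.2.2.1.1 t.2.2.2.2.1 * Ltil t.2.2.2.1.2 t.2.2.2.2.2)) := rfl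
          rw [this, integral_mul_const,
            integral_prod_mul (f := fun x => Ktil x t.1.1) (g := fun y => Ltil y t.1.2),
            hKcent]
          ring
        simp_rw [hz]
        simp

lemma bb_meas (hKmeas : Measurable (Function.uncurry Ktil))
    (hLmeas : Measurable (Function.uncurry Ltil)) (hwmeas : ∀ i, Measurable (w i))
    (i j : Fin n) : Measurable (bb Ktil Ltil w i j) :=
  (measK hKmeas ((hwmeas i).fst) ((hwmeas j).fst)).mul
    (measK hLmeas ((hwmeas i).snd) ((hwmeas j).snd))

lemma bb_bdd {BK BL : ℝ} (hKbdd : ∀ x x', |Ktil x x'| ≤ BK) (hLbdd : ∀ y y', |Ltil y y'| ≤ BL)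
    (hBK0 : 0 ≤ BK) (i j : Fin n) (ω : Ω) : |bb Ktil Ltil w i j ω| ≤ BK * BL := by
  rw [bb, abs_mul]
  exact mul_le_mul (hKbdd _ _) (hLbdd _ _) (abs_nonneg _) hBK0

lemma bb_symm (hKsymm : ∀ x x', Ktil x x' = Ktil x' x)
    (hLsymm : ∀ y y', Ltil y y' = Ltil y' y) (i j : Fin n) (ω : Ω) :
    bb Ktil Ltil w i j ω = bb Ktil Ltil w j i ω := by
  rw [bb, bb, hKsymm, hLsymm]

end Terms


end ThirdMoment

open MeasureTheory ProbabilityTheory in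
/-- Third moment of ∑_{i<j} B_{ij}:
E[(∑_{i<j}B_{ij})³] = (n(n-1)/2)E[B₁₂³] + n(n-1)(n-2)·M₃N₃, where E[B₁₂B₂₃B₃₁] = M₃N₃. -/
theorem third_moment_offdiag_sum
    {X Y : Type*} [MeasurableSpace X] [MeasurableSpace Y]
    (Px : Measure X) (Py : Measure Y)
    [IsProbabilityMeasure Px] [IsProbabilityMeasure Py]
    {Ω : Type*} [MeasurableSpace Ω] (μ : Measure Ω) [IsProbabilityMeasure μ]
    (Ktil : X → X → ℝ) (Ltil : Y → Y → ℝ)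
    (hKmeas : Measurable (Function.uncurry Ktil))
    (hLmeas : Measurable (Function.uncurry Ltil))
    (hKsymm : ∀ x x', Ktil x x' = Ktil x' x) (hLsymm : ∀ y y', Ltil y y' = Ltil y' y)
    (BK BL : ℝ) (hKbdd : ∀ x x', |Ktil x x'| ≤ BK) (hLbdd : ∀ y y', |Ltil y y'| ≤ BL)
    (hKcent : ∀ x', (∫ x, Ktil x x' ∂Px) = 0)
    (hLcent : ∀ y', (∫ y, Ltil y y' ∂Py) = 0)
    (n : ℕ) (hn : 3 ≤ n)
    (w : Fin n → Ω → X × Y) (hwmeas : ∀ i, Measurable (w i))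
    (hwiid : iIndepFun w μ)
    (hwlaw : ∀ i, μ.map (w i) = Px.prod Py)
    (Bsum : Ω → ℝ)
    (hBsum : ∀ ω, Bsum ω =
      ∑ q ∈ Finset.univ.filter (fun q : Fin n × Fin n => q.1 < q.2),
        Ktil (w q.1 ω).1 (w q.2 ω).1 * Ltil (w q.1 ω).2 (w q.2 ω).2)
    (M₃ N₃ : ℝ)
    (hM₃ : M₃ = ∫ q : X × X × X,
      Ktil q.1 q.2.1 * Ktil q.2.1 q.2.2 * Ktil q.2.2 q.1 ∂(Px.prod (Px.prod Px)))
    (hN₃ : N₃ = ∫ q : Y × Y × Y,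
      Ltil q.1 q.2.1 * Ltil q.2.1 q.2.2 * Ltil q.2.2 q.1 ∂(Py.prod (Py.prod Py))) :
    ((∫ q : (X × Y) × (X × Y) × (X × Y),
        (Ktil q.1.1 q.2.1.1 * Ltil q.1.2 q.2.1.2) *
          (Ktil q.2.1.1 q.2.2.1 * Ltil q.2.1.2 q.2.2.2) *
            (Ktil q.2.2.1 q.1.1 * Ltil q.2.2.2 q.1.2)
          ∂((Px.prod Py).prod ((Px.prod Py).prod (Px.prod Py)))) = M₃ * N₃) ∧
    (∫ ω, (Bsum ω) ^ 3 ∂μ) =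
      ((n : ℝ) * ((n : ℝ) - 1) / 2) *
          (∫ q : (X × Y) × (X × Y),
            (Ktil q.1.1 q.2.1 * Ltil q.1.2 q.2.2) ^ 3
              ∂((Px.prod Py).prod (Px.prod Py)))
        + (n : ℝ) * ((n : ℝ) - 1) * ((n : ℝ) - 2) * (M₃ * N₃) := by
  classical
  obtain ⟨x0⟩ := ThirdMoment.nonempty_of_prob Px
  obtain ⟨y0⟩ := ThirdMoment.nonempty_of_prob Py
  have hBK0 : 0 ≤ BK := (abs_nonneg _).trans (hKbdd x0 x0)
  have hBL0 : 0 ≤ BL := (abs_nonneg _).trans (hLbdd y0 y0)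
  -- ### Part 1 : factorization of the triangle integral
  have hfac : (∫ q : (X × Y) × (X × Y) × (X × Y),
      (Ktil q.1.1 q.2.1.1 * Ltil q.1.2 q.2.1.2) *
        (Ktil q.2.1.1 q.2.2.1 * Ltil q.2.1.2 q.2.2.2) *
          (Ktil q.2.2.1 q.1.1 * Ltil q.2.2.2 q.1.2)
        ∂((Px.prod Py).prod ((Px.prod Py).prod (Px.prod Py)))) = M₃ * N₃ := by
    have hfK : Measurable (fun p : X × X × X =>
        (fun a b c => Ktil a b * Ktil b c * Ktil c a) p.1 p.2.1 p.2.2) := by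
      simp only
      exact ((ThirdMoment.measK hKmeas measurable_fst measurable_snd.fst).mul
        (ThirdMoment.measK hKmeas measurable_snd.fst measurable_snd.snd)).mul
        (ThirdMoment.measK hKmeas measurable_snd.snd measurable_fst)
    have hgL : Measurable (fun p : Y × Y × Y =>
        (fun a b c => Ltil a b * Ltil b c * Ltil c a) p.1 p.2.1 p.2.2) := by
      simp only
      exact ((ThirdMoment.measK hLmeas measurable_fst measurable_snd.fst).mul
        (ThirdMoment.measK hLmeas measurable_snd.fst measurable_snd.snd)).mul
        (ThirdMoment.measK hLmeas measurable_snd.snd measurable_fst)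
    have hCf : ∀ a b c : X, |(fun a b c => Ktil a b * Ktil b c * Ktil c a) a b c|
        ≤ BK * BK * BK := by
      intro a b c
      simp only [abs_mul]
      gcongr <;> first | exact hKbdd _ _ | exact hBK0 | exact abs_nonneg _
    have hCg : ∀ a b c : Y, |(fun a b c => Ltil a b * Ltil b c * Ltil c a) a b c|
        ≤ BL * BL * BL := by
      intro a b c
      simp only [abs_mul]
      gcongr <;> first | exact hLbdd _ _ | exact hBL0 | exact abs_nonneg _
    have hcong : (fun q : (X × Y) × (X × Y) × (X × Y) =>
        (Ktil q.1.1 q.2.1.1 * Ltil q.1.2 q.2.1.2) *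
          (Ktil q.2.1.1 q.2.2.1 * Ltil q.2.1.2 q.2.2.2) *
            (Ktil q.2.2.1 q.1.1 * Ltil q.2.2.2 q.1.2)) = fun q =>
        (fun a b c => Ktil a b * Ktil b c * Ktil c a) q.1.1 q.2.1.1 q.2.2.1 *
        (fun a b c => Ltil a b * Ltil b c * Ltil c a) q.1.2 q.2.1.2 q.2.2.2 := by
      funext q; simp only; ring
    rw [hcong, ThirdMoment.factor3 Px Py _ _ hfK hgL hCf hCg, hM₃, hN₃]
  refine ⟨hfac, ?_⟩
  -- ### Part 2 : the third moment
  set B := ThirdMoment.bb Ktil Ltil w with hB_def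
  set S : Finset (Fin n × Fin n) :=
    Finset.univ.filter (fun q : Fin n × Fin n => q.1 < q.2) with hS_def
  set F : (Fin n × Fin n) × (Fin n × Fin n) × (Fin n × Fin n) → ℝ :=
    fun t => ∫ ω, B t.1.1 t.1.2 ω * (B t.2.1.1 t.2.1.2 ω * B t.2.2.1 t.2.2.2 ω) ∂μ
    with hF_def
  have hSmem : ∀ p : Fin n × Fin n, p ∈ S ↔ p.1 < p.2 := by
    intro p; rw [hS_def, Finset.mem_filter]; simp
  have hBmeas : ∀ i j, Measurable (B i j) :=
    fun i j => ThirdMoment.bb_meas hKmeas hLmeas hwmeas i j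
  have hBbdd : ∀ i j ω, |B i j ω| ≤ BK * BL :=
    fun i j ω => ThirdMoment.bb_bdd hKbdd hLbdd hBK0 i j ω
  have hBsymm : ∀ i j ω, B i j ω = B j i ω :=
    fun i j ω => ThirdMoment.bb_symm hKsymm hLsymm i j ω
  have hBe : ∀ (i j : Fin n), i ≠ j → ∀ ω,
      B (ThirdMoment.e i j).1 (ThirdMoment.e i j).2 ω = B i j ω := by
    intro i j hij ω
    rcases lt_or_gt_of_ne hij with h | h
    · rw [ThirdMoment.e_lt h]
    · rw [ThirdMoment.e_gt h]; exact (hBsymm i j ω).symm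
  -- integrability of the generic term
  have hterm_meas : ∀ p q r : Fin n × Fin n,
      Measurable (fun ω => B p.1 p.2 ω * (B q.1 q.2 ω * B r.1 r.2 ω)) :=
    fun p q r => (hBmeas _ _).mul ((hBmeas _ _).mul (hBmeas _ _))
  have hterm_int : ∀ p q r : Fin n × Fin n,
      Integrable (fun ω => B p.1 p.2 ω * (B q.1 q.2 ω * B r.1 r.2 ω)) μ := by
    intro p q r
    refine ThirdMoment.integrable_of_bdd (hterm_meas p q r).aestronglyMeasurable
      (C := (BK * BL) * ((BK * BL) * (BK * BL))) (fun ω => ?_)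
    rw [abs_mul, abs_mul]
    have h0 : 0 ≤ BK * BL := mul_nonneg hBK0 hBL0
    gcongr <;> first | exact hBbdd _ _ _ | exact abs_nonneg _ | exact h0
  -- expansion of the cube
  have hBsum' : ∀ ω, Bsum ω = ∑ q ∈ S, B q.1 q.2 ω := hBsum
  have hcube : ∀ ω, Bsum ω ^ 3 =
      ∑ p ∈ S, ∑ q ∈ S, ∑ r ∈ S, B p.1 p.2 ω * (B q.1 q.2 ω * B r.1 r.2 ω) := by
    intro ω
    rw [hBsum' ω]
    rw [show (∑ q ∈ S, B q.1 q.2 ω) ^ 3 =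
      (∑ q ∈ S, B q.1 q.2 ω) * (∑ q ∈ S, B q.1 q.2 ω) * (∑ q ∈ S, B q.1 q.2 ω) from by
        ring]
    rw [Finset.sum_mul_sum, Finset.sum_mul]
    refine Finset.sum_congr rfl fun p _ => ?_
    rw [Finset.sum_mul]
    refine Finset.sum_congr rfl fun q _ => ?_
    rw [Finset.mul_sum]
    exact Finset.sum_congr rfl fun r _ => mul_assoc _ _ _
  have hsplit : ∫ ω, Bsum ω ^ 3 ∂μ =
      ∑ p ∈ S, ∑ q ∈ S, ∑ r ∈ S, F (p, q, r) := by
    calc ∫ ω, Bsum ω ^ 3 ∂μ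
        = ∫ ω, ∑ p ∈ S, ∑ q ∈ S, ∑ r ∈ S,
            B p.1 p.2 ω * (B q.1 q.2 ω * B r.1 r.2 ω) ∂μ :=
          integral_congr_ae (Filter.Eventually.of_forall hcube)
      _ = ∑ p ∈ S, ∑ q ∈ S, ∑ r ∈ S, F (p, q, r) := by
          rw [integral_finset_sum _ (fun p _ => integrable_finset_sum _
            (fun q _ => integrable_finset_sum _ (fun r _ => hterm_int p q r)))]
          refine Finset.sum_congr rfl fun p _ => ?_
          rw [integral_finset_sum _ (fun q _ =>
            integrable_finset_sum _ (fun r _ => hterm_int p q r))]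
          refine Finset.sum_congr rfl fun q _ => ?_
          rw [integral_finset_sum _ (fun r _ => hterm_int p q r)]
  -- the index sets
  set D : Finset (Fin n × Fin n × Fin n) :=
    Finset.univ.filter (fun t : Fin n × Fin n × Fin n =>
      t.1 ≠ t.2.1 ∧ t.1 ≠ t.2.2 ∧ t.2.1 ≠ t.2.2) with hD_def
  set gmap : Fin n × Fin n × Fin n → (Fin n × Fin n) × (Fin n × Fin n) × (Fin n × Fin n) :=
    fun t => (ThirdMoment.e t.1 t.2.1, ThirdMoment.e t.2.1 t.2.2, ThirdMoment.e t.2.2 t.1)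
    with hg_def
  set diag : Finset ((Fin n × Fin n) × (Fin n × Fin n) × (Fin n × Fin n)) :=
    S.image (fun p => (p, p, p)) with hdiag_def
  set TRI : Finset ((Fin n × Fin n) × (Fin n × Fin n) × (Fin n × Fin n)) :=
    D.image gmap with hTRI_def
  have hDmem : ∀ t : Fin n × Fin n × Fin n,
      t ∈ D ↔ t.1 ≠ t.2.1 ∧ t.1 ≠ t.2.2 ∧ t.2.1 ≠ t.2.2 := by
    intro t; rw [hD_def, Finset.mem_filter]; simp
  -- subset
  have hsub : diag ∪ TRI ⊆ S ×ˢ S ×ˢ S := by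
    intro t ht
    rw [Finset.mem_union] at ht
    rcases ht with ht | ht
    · obtain ⟨p, hp, rfl⟩ := Finset.mem_image.mp ht
      exact Finset.mem_product.mpr ⟨hp, Finset.mem_product.mpr ⟨hp, hp⟩⟩
    · obtain ⟨t', ht', rfl⟩ := Finset.mem_image.mp ht
      obtain ⟨h1, h2, h3⟩ := (hDmem t').mp ht'
      refine Finset.mem_product.mpr ⟨?_, Finset.mem_product.mpr ⟨?_, ?_⟩⟩
      · exact (hSmem _).mpr (ThirdMoment.e_fst_lt_snd h1)
      · exact (hSmem _).mpr (ThirdMoment.e_fst_lt_snd h3)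
      · exact (hSmem _).mpr (ThirdMoment.e_fst_lt_snd (fun h => h2 h.symm))
  -- disjointness
  have hdisj : Disjoint diag TRI := by
    rw [Finset.disjoint_left]
    rintro a ha haT
    obtain ⟨p, hpS, rfl⟩ := Finset.mem_image.mp ha
    obtain ⟨⟨i, j, k⟩, htD, heq⟩ := Finset.mem_image.mp haT
    obtain ⟨hij, hik, hjk⟩ := (hDmem _).mp htD
    have h1 := congrArg Prod.fst heq
    have h2 := congrArg (fun z : (Fin n × Fin n) × (Fin n × Fin n) × (Fin n × Fin n) =>
      z.2.1) heq
    simp only [hg_def] at h1 h2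
    have := ThirdMoment.e_eq_iff hij hjk (h1.trans h2.symm)
    rcases this with ⟨ha1, ha2⟩ | ⟨ha1, ha2⟩
    · exact hik (ha1.trans ha2)
    · exact hik ha1
  -- value on the diagonal
  have hdiag_val : ∀ p ∈ S, F (p, p, p) =
      ∫ q : (X × Y) × (X × Y), (Ktil q.1.1 q.2.1 * Ltil q.1.2 q.2.2) ^ 3
        ∂((Px.prod Py).prod (Px.prod Py)) := by
    intro p hp
    have hlt : p.1 < p.2 := (hSmem p).mp hp
    have h1 : (fun ω => B p.1 p.2 ω * (B p.1 p.2 ω * B p.1 p.2 ω))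
        = fun ω => (B p.1 p.2 ω) ^ 3 := by funext ω; ring
    show (∫ ω, B p.1 p.2 ω * (B p.1 p.2 ω * B p.1 p.2 ω) ∂μ) = _
    rw [h1]
    exact ThirdMoment.diag_term Px Py hKmeas hLmeas hwmeas hwiid hwlaw (ne_of_lt hlt)
  -- value on triangles
  have htri_val : ∀ t ∈ D, F (gmap t) =
      ∫ q : (X × Y) × (X × Y) × (X × Y),
        (Ktil q.1.1 q.2.1.1 * Ltil q.1.2 q.2.1.2) *
          (Ktil q.2.1.1 q.2.2.1 * Ltil q.2.1.2 q.2.2.2) *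
            (Ktil q.2.2.1 q.1.1 * Ltil q.2.2.2 q.1.2)
          ∂((Px.prod Py).prod ((Px.prod Py).prod (Px.prod Py))) := by
    rintro ⟨i, j, k⟩ ht
    obtain ⟨hij, hik, hjk⟩ := (hDmem _).mp ht
    have h1 : (fun ω => B (ThirdMoment.e i j).1 (ThirdMoment.e i j).2 ω *
        (B (ThirdMoment.e j k).1 (ThirdMoment.e j k).2 ω *
         B (ThirdMoment.e k i).1 (ThirdMoment.e k i).2 ω))
        = fun ω => B i j ω * (B j k ω * B k i ω) := by
      funext ω
      rw [hBe i j hij ω, hBe j k hjk ω, hBe k i (fun h => hik h.symm) ω]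
    show (∫ ω, B (ThirdMoment.e i j).1 (ThirdMoment.e i j).2 ω *
        (B (ThirdMoment.e j k).1 (ThirdMoment.e j k).2 ω *
         B (ThirdMoment.e k i).1 (ThirdMoment.e k i).2 ω) ∂μ) = _
    rw [h1]
    exact ThirdMoment.tri_term Px Py hKmeas hLmeas hwmeas hwiid hwlaw hij hik hjk
  -- vanishing terms
  have hzero_val : ∀ t ∈ S ×ˢ S ×ˢ S, t ∉ diag ∪ TRI → F t = 0 := by
    rintro ⟨p, q, r⟩ ht hnt
    obtain ⟨hpS, hqr⟩ := Finset.mem_product.mp ht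
    obtain ⟨hqS, hrS⟩ := Finset.mem_product.mp hqr
    have hp' : p.1 < p.2 := (hSmem p).mp hpS
    have hq' : q.1 < q.2 := (hSmem q).mp hqS
    have hr' : r.1 < r.2 := (hSmem r).mp hrS
    rw [Finset.mem_union, not_or] at hnt
    obtain ⟨hnd, hnT⟩ := hnt
    by_cases hd : ∀ v : Fin n,
      ¬((ThirdMoment.memv v p ∧ ¬ThirdMoment.memv v q ∧ ¬ThirdMoment.memv v r) ∨
        (¬ThirdMoment.memv v p ∧ ThirdMoment.memv v q ∧ ¬ThirdMoment.memv v r) ∨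
        (¬ThirdMoment.memv v p ∧ ¬ThirdMoment.memv v q ∧ ThirdMoment.memv v r))
    · exfalso
      have hne : ¬(q = p ∧ r = p) := by
        rintro ⟨h1, h2⟩
        exact hnd (Finset.mem_image.mpr ⟨p, hpS, by simp [Prod.ext_iff, h1, h2]⟩)
      obtain ⟨i, j, k, hij, hjk, hik, hpe, hqe, hre⟩ :=
        ThirdMoment.classify hp' hq' hr' hne hd
      refine hnT (Finset.mem_image.mpr ⟨(i, j, k), ?_, ?_⟩)
      · exact (hDmem _).mpr ⟨hij, hik, hjk⟩
      · rw [hg_def]; simp only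
        rw [← hpe, ← hqe, ← hre]
    · push_neg at hd
      obtain ⟨v, hv⟩ := hd
      have hEZ : ∀ (v' u a2 b2 a3 b3 : Fin n), v' ≠ u → v' ≠ a2 → v' ≠ b2 →
          v' ≠ a3 → v' ≠ b3 →
          (∫ ω, B v' u ω * (B a2 b2 ω * B a3 b3 ω) ∂μ) = 0 := by
        intro v' u a2 b2 a3 b3 h1 h2 h3 h4 h5
        exact ThirdMoment.zero_term Px Py hKmeas hLmeas hKbdd hLbdd hKcent
          hwmeas hwiid hwlaw h1 h2 h3 h4 h5
      rcases hv with ⟨hvp, hvq, hvr⟩ | ⟨hvp, hvq, hvr⟩ | ⟨hvp, hvq, hvr⟩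
      · -- v belongs only to p
        rw [ThirdMoment.memv] at hvp
        rw [ThirdMoment.memv, not_or] at hvq hvr
        obtain ⟨hq1, hq2⟩ := hvq
        obtain ⟨hr1, hr2⟩ := hvr
        show (∫ ω, B p.1 p.2 ω * (B q.1 q.2 ω * B r.1 r.2 ω) ∂μ) = 0
        rcases hvp with hv1 | hv2
        · subst hv1
          exact hEZ _ _ _ _ _ _ (ne_of_lt hp') hq1 hq2 hr1 hr2
        · subst hv2
          have hre : (fun ω => B p.1 p.2 ω * (B q.1 q.2 ω * B r.1 r.2 ω))
              = fun ω => B p.2 p.1 ω * (B q.1 q.2 ω * B r.1 r.2 ω) := by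
            funext ω; rw [hBsymm p.1 p.2 ω]
          rw [hre]
          exact hEZ _ _ _ _ _ _ (ne_of_gt hp') hq1 hq2 hr1 hr2
      · -- v belongs only to q
        rw [ThirdMoment.memv] at hvq
        rw [ThirdMoment.memv, not_or] at hvp hvr
        obtain ⟨hp1, hp2⟩ := hvp
        obtain ⟨hr1, hr2⟩ := hvr
        show (∫ ω, B p.1 p.2 ω * (B q.1 q.2 ω * B r.1 r.2 ω) ∂μ) = 0
        rcases hvq with hv1 | hv2
        · subst hv1
          have hre : (fun ω => B p.1 p.2 ω * (B q.1 q.2 ω * B r.1 r.2 ω))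
              = fun ω => B q.1 q.2 ω * (B p.1 p.2 ω * B r.1 r.2 ω) := by
            funext ω; ring
          rw [hre]
          exact hEZ _ _ _ _ _ _ (ne_of_lt hq') hp1 hp2 hr1 hr2
        · subst hv2
          have hre : (fun ω => B p.1 p.2 ω * (B q.1 q.2 ω * B r.1 r.2 ω))
              = fun ω => B q.2 q.1 ω * (B p.1 p.2 ω * B r.1 r.2 ω) := by
            funext ω; rw [hBsymm q.2 q.1 ω]; ring
          rw [hre]
          exact hEZ _ _ _ _ _ _ (ne_of_gt hq') hp1 hp2 hr1 hr2
      · -- v belongs only to r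
        rw [ThirdMoment.memv] at hvr
        rw [ThirdMoment.memv, not_or] at hvp hvq
        obtain ⟨hp1, hp2⟩ := hvp
        obtain ⟨hq1, hq2⟩ := hvq
        show (∫ ω, B p.1 p.2 ω * (B q.1 q.2 ω * B r.1 r.2 ω) ∂μ) = 0
        rcases hvr with hv1 | hv2
        · subst hv1
          have hre : (fun ω => B p.1 p.2 ω * (B q.1 q.2 ω * B r.1 r.2 ω))
              = fun ω => B r.1 r.2 ω * (B p.1 p.2 ω * B q.1 q.2 ω) := by
            funext ω; ring
          rw [hre]
          exact hEZ _ _ _ _ _ _ (ne_of_lt hr') hp1 hp2 hq1 hq2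
        · subst hv2
          have hre : (fun ω => B p.1 p.2 ω * (B q.1 q.2 ω * B r.1 r.2 ω))
              = fun ω => B r.2 r.1 ω * (B p.1 p.2 ω * B q.1 q.2 ω) := by
            funext ω; rw [hBsymm r.2 r.1 ω]; ring
          rw [hre]
          exact hEZ _ _ _ _ _ _ (ne_of_gt hr') hp1 hp2 hq1 hq2
  -- injectivity of gmap on D
  have hinjD : ∀ t ∈ D, ∀ t' ∈ D, gmap t = gmap t' → t = t' := by
    rintro ⟨i, j, k⟩ ht ⟨i', j', k'⟩ ht' heq
    obtain ⟨hij, hik, hjk⟩ := (hDmem _).mp ht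
    obtain ⟨hij', hik', hjk'⟩ := (hDmem _).mp ht'
    have h1 := congrArg Prod.fst heq
    have h2 := congrArg (fun z : (Fin n × Fin n) × (Fin n × Fin n) × (Fin n × Fin n) =>
      z.2.1) heq
    have h3 := congrArg (fun z : (Fin n × Fin n) × (Fin n × Fin n) × (Fin n × Fin n) =>
      z.2.2) heq
    simp only [hg_def] at h1 h2 h3
    have e1 := ThirdMoment.e_eq_iff hij hij' h1
    have e2 := ThirdMoment.e_eq_iff hjk hjk' h2
    have e3 := ThirdMoment.e_eq_iff (fun h => hik h.symm) (fun h => hik' h.symm) h3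
    rw [Prod.ext_iff, Prod.ext_iff]
    simp only [ne_eq, Fin.ext_iff] at e1 e2 e3 hij hik hjk hij' hik' hjk' ⊢
    omega
  -- put the sum together
  have hmain : ∑ p ∈ S, ∑ q ∈ S, ∑ r ∈ S, F (p, q, r) =
      (S.card : ℝ) * (∫ q : (X × Y) × (X × Y),
          (Ktil q.1.1 q.2.1 * Ltil q.1.2 q.2.2) ^ 3 ∂((Px.prod Py).prod (Px.prod Py)))
        + (D.card : ℝ) * (M₃ * N₃) := by
    have hstep0 : ∑ p ∈ S, ∑ q ∈ S, ∑ r ∈ S, F (p, q, r)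
        = ∑ t ∈ S ×ˢ S ×ˢ S, F t := by
      rw [Finset.sum_product]
      refine Finset.sum_congr rfl fun p _ => ?_
      rw [Finset.sum_product]
    rw [hstep0, ← Finset.sum_subset hsub hzero_val, Finset.sum_union hdisj,
      Finset.sum_image (fun p hp p' hp' h => by
        simpa using (Prod.ext_iff.mp h).1),
      Finset.sum_image hinjD,
      Finset.sum_congr rfl hdiag_val,
      Finset.sum_congr rfl (fun t ht => (htri_val t ht).trans hfac),
      Finset.sum_const, Finset.sum_const, nsmul_eq_mul, nsmul_eq_mul]
  -- the cardinalities
  have hSn : (S.card : ℝ) = (n : ℝ) * ((n : ℝ) - 1) / 2 := by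
    have h := ThirdMoment.card_S n
    rw [← hS_def] at h
    have h2 : (2 : ℝ) * (S.card : ℝ) = (n : ℝ) * n - n := by
      have hle : n ≤ n * n := Nat.le_mul_of_pos_left n (by omega)
      exact_mod_cast congrArg (Nat.cast : ℕ → ℝ) h
    linarith
  have hDn : (D.card : ℝ) = (n : ℝ) * ((n : ℝ) - 1) * ((n : ℝ) - 2) := by
    have h := ThirdMoment.card_D n
    rw [← hD_def] at h
    have h1 : ((n - 1 : ℕ) : ℝ) = (n : ℝ) - 1 := by
      have : 1 ≤ n := by omega
      push_cast [Nat.cast_sub this]; ring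
    have h2 : (((n-1) * (n-1) - (n-1) : ℕ) : ℝ) = ((n : ℝ) - 1) * ((n : ℝ) - 1) - ((n : ℝ) - 1) := by
      have hle : (n-1) ≤ (n-1) * (n-1) := Nat.le_mul_of_pos_left _ (by omega)
      rw [Nat.cast_sub hle, Nat.cast_mul, h1]
    have h3 : (D.card : ℝ) = (n : ℝ) * (((n : ℝ) - 1) * ((n : ℝ) - 1) - ((n : ℝ) - 1)) := by
      rw [h, Nat.cast_mul, h2]
    rw [h3]; ring
  rw [hsplit, hmain, hSn, hDn]
end
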